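/- arXiv:1302.4776 — 4 statements merged into one kernel-verified Lean document; each statement's English description precedes it below -/
import Mathlib

section
/- For any two full-support probability distributions μ ≠ π on 𝒴, the Chernoff information between the two product distributions μ⊗π and π⊗μ on 𝒴×𝒴 equals twice the Bhattacharyya distance between μ and π: C( μ(y)π(y') , π(y)μ(y') ) = 2·B(μ, π). -/
open Filter Finset Topology

noncomputable section

/-- `p` is a probability distribution on the finite alphabet. -/
def IsProb {𝓨 : Type} [Fintype 𝓨] (p : 𝓨 → ℝ) : Prop :=
  (∀ y, 0 ≤ p y) ∧ ∑ y, p y = 1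

/-- `p` has full support. -/
def FullSupport {𝓨 : Type} (p : 𝓨 → ℝ) : Prop := ∀ y, 0 < p y

/-- Bhattacharyya distance `B(p,q) = -log ∑ √(p y) √(q y)`. -/
def Bhat {𝓨 : Type} [Fintype 𝓨] (p q : 𝓨 → ℝ) : ℝ :=
  - Real.log (∑ y, Real.sqrt (p y) * Real.sqrt (q y))

/-- Chernoff information `C(p,q) = sup_{s ∈ [0,1]} -log ∑ (p y)^s (q y)^(1-s)`. -/
def Chernoff {𝓨 : Type} [Fintype 𝓨] (p q : 𝓨 → ℝ) : ℝ :=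
  ⨆ s : Set.Icc (0:ℝ) 1, - Real.log (∑ y, p y ^ (s : ℝ) * q y ^ (1 - (s : ℝ)))

/-- `C(μ⊗π, π⊗μ) = 2·B(μ,π)` for full-support `μ ≠ π`. -/
theorem statement14 (𝓨 : Type) [Fintype 𝓨] [Nonempty 𝓨]
    (μ π : 𝓨 → ℝ) (hμ : IsProb μ) (hπ : IsProb π)
    (hμf : FullSupport μ) (hπf : FullSupport π) (hne : μ ≠ π) :
    Chernoff (fun z : 𝓨 × 𝓨 => μ z.1 * π z.2) (fun z : 𝓨 × 𝓨 => π z.1 * μ z.2)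
      = 2 * Bhat μ π := by
  classical
  set g : ℝ → ℝ := fun s => ∑ y, μ y ^ s * π y ^ (1 - s) with hg
  have hgpos : ∀ s : ℝ, 0 < g s := by
    intro s
    apply Finset.sum_pos
    · intro y _
      exact mul_pos (Real.rpow_pos_of_pos (hμf y) _) (Real.rpow_pos_of_pos (hπf y) _)
    · exact Finset.univ_nonempty
  -- the double sum factorizes
  have hfact : ∀ s : ℝ,
      (∑ z : 𝓨 × 𝓨, (μ z.1 * π z.2) ^ s * (π z.1 * μ z.2) ^ (1 - s))
        = g s * g (1 - s) := by
    intro s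
    rw [Fintype.sum_prod_type]
    have : ∀ y y' : 𝓨, (μ y * π y') ^ s * (π y * μ y') ^ (1 - s)
        = (μ y ^ s * π y ^ (1 - s)) * (μ y' ^ (1 - s) * π y' ^ s) := by
      intro y y'
      rw [Real.mul_rpow (hμf y).le (hπf y').le, Real.mul_rpow (hπf y).le (hμf y').le]
      ring
    simp_rw [this, ← Finset.mul_sum, ← Finset.sum_mul]
    congr 1
    simp [hg, sub_sub_cancel]
  -- Cauchy–Schwarz: g(1/2)^2 ≤ g s * g (1-s)
  have hCS : ∀ s : ℝ, g (1/2) ^ 2 ≤ g s * g (1 - s) := by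
    intro s
    have h := Finset.sum_mul_sq_le_sq_mul_sq Finset.univ
      (fun y => μ y ^ (s/2) * π y ^ ((1-s)/2))
      (fun y => π y ^ (s/2) * μ y ^ ((1-s)/2))
    have h1 : ∀ y, (μ y ^ (s/2) * π y ^ ((1-s)/2)) * (π y ^ (s/2) * μ y ^ ((1-s)/2))
        = μ y ^ (1/2 : ℝ) * π y ^ (1/2 : ℝ) := by
      intro y
      have hm : μ y ^ (s/2) * μ y ^ ((1-s)/2) = μ y ^ (1/2 : ℝ) := by
        rw [← Real.rpow_add (hμf y)]; congr 1; ring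
      have hp : π y ^ ((1-s)/2) * π y ^ (s/2) = π y ^ (1/2 : ℝ) := by
        rw [← Real.rpow_add (hπf y)]; congr 1; ring
      calc (μ y ^ (s/2) * π y ^ ((1-s)/2)) * (π y ^ (s/2) * μ y ^ ((1-s)/2))
          = (μ y ^ (s/2) * μ y ^ ((1-s)/2)) * (π y ^ ((1-s)/2) * π y ^ (s/2)) := by ring
        _ = _ := by rw [hm, hp]
    have h2 : ∀ y, (μ y ^ (s/2) * π y ^ ((1-s)/2)) ^ 2 = μ y ^ s * π y ^ (1 - s) := by
      intro y
      have hm : (μ y ^ (s/2)) ^ 2 = μ y ^ s := by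
        rw [sq, ← Real.rpow_add (hμf y)]; norm_num
      have hp : (π y ^ ((1-s)/2)) ^ 2 = π y ^ (1 - s) := by
        rw [sq, ← Real.rpow_add (hπf y)]; norm_num
      rw [mul_pow, hm, hp]
    have h3 : ∀ y, (π y ^ (s/2) * μ y ^ ((1-s)/2)) ^ 2 = μ y ^ (1 - s) * π y ^ (1 - (1 - s)) := by
      intro y
      have hm : (μ y ^ ((1-s)/2)) ^ 2 = μ y ^ (1 - s) := by
        rw [sq, ← Real.rpow_add (hμf y)]; norm_num
      have hp : (π y ^ (s/2)) ^ 2 = π y ^ (1 - (1 - s)) := by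
        rw [sq, ← Real.rpow_add (hπf y)]; norm_num
      rw [mul_pow, hm, hp]; ring
    simp only [h1, h2, h3] at h
    simpa [hg, sub_sub_cancel, show (1:ℝ) - 2⁻¹ = 2⁻¹ from by norm_num] using h
  -- the value of the inner function at any s
  have hval : ∀ s : ℝ,
      - Real.log (∑ z : 𝓨 × 𝓨, (μ z.1 * π z.2) ^ s * (π z.1 * μ z.2) ^ (1 - s))
        = -(Real.log (g s) + Real.log (g (1 - s))) := by
    intro s
    rw [hfact s, Real.log_mul (hgpos s).ne' (hgpos (1 - s)).ne']
  have hBhat : Bhat μ π = - Real.log (g (1/2)) := by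
    unfold Bhat
    congr 2
    apply Finset.sum_congr rfl
    intro y _
    rw [Real.sqrt_eq_rpow, Real.sqrt_eq_rpow]
    norm_num
  -- upper bound
  have hub : ∀ s : Set.Icc (0:ℝ) 1,
      - Real.log (∑ z : 𝓨 × 𝓨, (μ z.1 * π z.2) ^ (s:ℝ) * (π z.1 * μ z.2) ^ (1 - (s:ℝ)))
        ≤ 2 * Bhat μ π := by
    intro s
    rw [hval, hBhat]
    have hlog : Real.log (g (1/2) ^ 2) ≤ Real.log (g (s:ℝ) * g (1 - (s:ℝ))) :=
      Real.log_le_log (pow_pos (hgpos _) 2) (hCS _)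
    rw [Real.log_pow, Real.log_mul (hgpos _).ne' (hgpos _).ne'] at hlog
    push_cast at hlog
    linarith
  -- value at s = 1/2
  have hmem : (1/2 : ℝ) ∈ Set.Icc (0:ℝ) 1 := by constructor <;> norm_num
  have hhalf :
      - Real.log (∑ z : 𝓨 × 𝓨, (μ z.1 * π z.2) ^ ((1:ℝ)/2) * (π z.1 * μ z.2) ^ (1 - (1:ℝ)/2))
        = 2 * Bhat μ π := by
    rw [hval, hBhat]
    norm_num
    ring
  unfold Chernoff
  apply le_antisymm
  · exact ciSup_le hub
  · have hbdd : BddAbove (Set.range fun s : Set.Icc (0:ℝ) 1 =>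
        - Real.log (∑ z : 𝓨 × 𝓨, (μ z.1 * π z.2) ^ (s:ℝ) * (π z.1 * μ z.2) ^ (1 - (s:ℝ)))) := by
      refine ⟨2 * Bhat μ π, ?_⟩
      rintro _ ⟨s, rfl⟩
      exact hub s
    refine le_ciSup_of_le hbdd ⟨1/2, hmem⟩ ?_
    exact hhalf.ge
end
end

section
/- For any full-support probability distributions μ_i, μ_j, π on 𝒴, the Chernoff information between the product distributions μ_i⊗π and π⊗μ_j on 𝒴×𝒴 satisfies C( μ_i(y)π(y') , π(y)μ_j(y') ) ≥ B(μ_i, π) + B(μ_j, π) ≥ min( 2·B(μ_i, π) , 2·B(μ_j, π) ). -/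
open Filter Finset Topology

noncomputable section

/-- `C(μᵢ⊗π, π⊗μⱼ) ≥ B(μᵢ,π) + B(μⱼ,π) ≥ min(2B(μᵢ,π), 2B(μⱼ,π))`. -/
theorem statement15 (𝓨 : Type) [Fintype 𝓨] [Nonempty 𝓨]
    (μi μj π : 𝓨 → ℝ) (hμi : IsProb μi) (hμj : IsProb μj) (hπ : IsProb π)
    (hμif : FullSupport μi) (hμjf : FullSupport μj) (hπf : FullSupport π) :
    Bhat μi π + Bhat μj π ≤
      Chernoff (fun z : 𝓨 × 𝓨 => μi z.1 * π z.2) (fun z : 𝓨 × 𝓨 => π z.1 * μj z.2) ∧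
    min (2 * Bhat μi π) (2 * Bhat μj π) ≤ Bhat μi π + Bhat μj π := by
  constructor
  · set P : 𝓨 × 𝓨 → ℝ := fun z => μi z.1 * π z.2 with hP
    set Q : 𝓨 × 𝓨 → ℝ := fun z => π z.1 * μj z.2 with hQ
    have hPpos : ∀ z, 0 < P z := fun z => mul_pos (hμif z.1) (hπf z.2)
    have hQpos : ∀ z, 0 < Q z := fun z => mul_pos (hπf z.1) (hμjf z.2)
    set f : Set.Icc (0:ℝ) 1 → ℝ :=
      fun s => - Real.log (∑ z, P z ^ (s : ℝ) * Q z ^ (1 - (s : ℝ))) with hf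
    have hbdd : BddAbove (Set.range f) := by
      obtain ⟨z0⟩ := (inferInstance : Nonempty 𝓨)
      set m : ℝ := min (P (z0, z0)) (Q (z0, z0)) with hm
      have hmpos : 0 < m := lt_min (hPpos _) (hQpos _)
      refine ⟨- Real.log m, ?_⟩
      rintro x ⟨s, rfl⟩
      have hs0 : (0:ℝ) ≤ (s : ℝ) := s.2.1
      have hs1 : (0:ℝ) ≤ 1 - (s : ℝ) := by linarith [s.2.2]
      have hterm : m ≤ P (z0, z0) ^ (s : ℝ) * Q (z0, z0) ^ (1 - (s : ℝ)) := by
        have h1 : m ^ (s : ℝ) ≤ P (z0, z0) ^ (s : ℝ) :=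
          Real.rpow_le_rpow hmpos.le (min_le_left _ _) hs0
        have h2 : m ^ (1 - (s : ℝ)) ≤ Q (z0, z0) ^ (1 - (s : ℝ)) :=
          Real.rpow_le_rpow hmpos.le (min_le_right _ _) hs1
        have hmm : m ^ (s : ℝ) * m ^ (1 - (s : ℝ)) = m := by
          rw [← Real.rpow_add hmpos]; ring_nf; exact Real.rpow_one m
        calc m = m ^ (s : ℝ) * m ^ (1 - (s : ℝ)) := hmm.symm
          _ ≤ P (z0, z0) ^ (s : ℝ) * Q (z0, z0) ^ (1 - (s : ℝ)) :=
            mul_le_mul h1 h2 (Real.rpow_nonneg hmpos.le _)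
              (Real.rpow_nonneg (hPpos _).le _)
      have hsum : m ≤ ∑ z, P z ^ (s : ℝ) * Q z ^ (1 - (s : ℝ)) := by
        refine hterm.trans (Finset.single_le_sum (f := fun z => P z ^ (s : ℝ) * Q z ^ (1 - (s : ℝ))) (fun z _ => ?_) (Finset.mem_univ (z0, z0)))
        exact mul_nonneg (Real.rpow_nonneg (hPpos _).le _) (Real.rpow_nonneg (hQpos _).le _)
      have := Real.log_le_log hmpos hsum
      simp only [hf]
      linarith
    have hval : f ⟨(1:ℝ)/2, by norm_num⟩ = Bhat μi π + Bhat μj π := by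
      have hhalf : (1:ℝ) - 1/2 = 1/2 := by norm_num
      have hsum_eq : (∑ z : 𝓨 × 𝓨, P z ^ ((1:ℝ)/2) * Q z ^ ((1:ℝ) - 1/2))
          = (∑ y, Real.sqrt (μi y) * Real.sqrt (π y)) *
            (∑ y, Real.sqrt (μj y) * Real.sqrt (π y)) := by
        rw [Fintype.sum_prod_type, Finset.sum_mul_sum]
        refine Finset.sum_congr rfl fun y _ => Finset.sum_congr rfl fun y' _ => ?_
        simp only [hP, hQ, hhalf]
        rw [Real.mul_rpow (hμif y).le (hπf y').le,
            Real.mul_rpow (hπf y).le (hμjf y').le,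
            ← Real.sqrt_eq_rpow, ← Real.sqrt_eq_rpow, ← Real.sqrt_eq_rpow,
            ← Real.sqrt_eq_rpow]
        ring
      have hBi : 0 < ∑ y, Real.sqrt (μi y) * Real.sqrt (π y) := by
        refine Finset.sum_pos (fun y _ => mul_pos (Real.sqrt_pos.2 (hμif y))
          (Real.sqrt_pos.2 (hπf y))) univ_nonempty
      have hBj : 0 < ∑ y, Real.sqrt (μj y) * Real.sqrt (π y) := by
        refine Finset.sum_pos (fun y _ => mul_pos (Real.sqrt_pos.2 (hμjf y))
          (Real.sqrt_pos.2 (hπf y))) univ_nonempty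
      simp only [hf, hsum_eq, Real.log_mul hBi.ne' hBj.ne', Bhat]
      ring
    calc Bhat μi π + Bhat μj π = f ⟨(1:ℝ)/2, by norm_num⟩ := hval.symm
      _ ≤ Chernoff P Q := le_ciSup hbdd _
  · rcases le_total (Bhat μi π) (Bhat μj π) with h | h
    · calc min (2 * Bhat μi π) (2 * Bhat μj π) ≤ 2 * Bhat μi π := min_le_left _ _
        _ ≤ Bhat μi π + Bhat μj π := by linarith
    · calc min (2 * Bhat μi π) (2 * Bhat μj π) ≤ 2 * Bhat μj π := min_le_right _ _
        _ ≤ Bhat μi π + Bhat μj π := by linarith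
end
end

section
/- (Lower bound in Theorem 9.) Fix M and a number of outliers T with 1 < T < M/2, a full-support typical distribution π on 𝒴, and full-support outlier distributions μ_1, …, μ_M on 𝒴 with μ_i ≠ π for every i. Let α be the minimum over pairs of subsets S, S' ⊆ {1,…,M} with |S| = |S'| = T and S ≠ S', and over M-tuples of probability distributions (q_1,…,q_M) on 𝒴 satisfying Σ_{i∉S} D( q_i ‖ (Σ_{k∉S} q_k)/(M−T) ) ≥ Σ_{i∉S'} D( q_i ‖ (Σ_{k∉S'} q_k)/(M−T) ), of Σ_{i∈S} D(q_i‖μ_i) + Σ_{j∉S} D(q_j‖π). Then α ≥ min_q min_{i=1,…,M} 2·B(μ_i, q), where the outer minimum is over all probability distributions q on 𝒴 satisfying D(q‖π) ≤ (1/(M−T))·( min_{1≤i<j≤M} C( μ_i(y)π(y') , π(y)μ_j(y') ) + T·C_π ), with C_π ≜ −log( min_{y∈𝒴} π(y) ). -/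
open Filter Finset Topology

noncomputable section

/-- Relative entropy `D(q‖p)` (natural log, convention `0·log 0 = 0`,
which holds since `Real.log 0 = 0` in Mathlib). -/
def KL {𝓨 : Type} [Fintype 𝓨] (q p : 𝓨 → ℝ) : ℝ :=
  ∑ y, q y * Real.log (q y / p y)

/-- The mixture `(∑_{k ∉ S} q_k)/(M - T)`. -/
def mixS {𝓨 : Type} [Fintype 𝓨] {M : ℕ} (T : ℕ) (q : Fin M → 𝓨 → ℝ)
    (S : Finset (Fin M)) : 𝓨 → ℝ :=
  fun a => (∑ k ∈ Finset.univ \ S, q k a) / ((M : ℝ) - T)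

/-- Feasible values of the optimization problem in Theorem 8: over pairs of
distinct hypotheses `S ≠ S'` of size `T` and tuples `(q_1,…,q_M)` of
distributions satisfying
`∑_{i∉S} D(q_i ‖ (∑_{k∉S} q_k)/(M-T)) ≥ ∑_{i∉S'} D(q_i ‖ (∑_{k∉S'} q_k)/(M-T))`,
with objective `∑_{i∈S} D(q_i‖μ_i) + ∑_{j∉S} D(q_j‖π)`. -/
def alphaSet {𝓨 : Type} [Fintype 𝓨] (M T : ℕ) (μ : Fin M → 𝓨 → ℝ) (π : 𝓨 → ℝ) : Set ℝ :=
  {x | ∃ S S' : Finset (Fin M), S.card = T ∧ S'.card = T ∧ S ≠ S' ∧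
    ∃ q : Fin M → 𝓨 → ℝ, (∀ j, IsProb (q j)) ∧
      (∑ i ∈ Finset.univ \ S, KL (q i) (mixS T q S) ≥
       ∑ i ∈ Finset.univ \ S', KL (q i) (mixS T q S')) ∧
      x = ∑ i ∈ S, KL (q i) (μ i) + ∑ j ∈ Finset.univ \ S, KL (q j) π}

namespace St18

/-- pointwise lower bound `p - r ≤ p log (p/r)`. -/
lemma term_lb {p r : ℝ} (hp : 0 ≤ p) (hr : 0 ≤ r) (h : p ≠ 0 → 0 < r) :
    p - r ≤ p * Real.log (p / r) := by
  rcases eq_or_lt_of_le hp with hp0 | hp0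
  · simp [← hp0]; linarith
  · have hrpos : 0 < r := h (ne_of_gt hp0)
    have h1 : Real.log (r / p) ≤ r / p - 1 :=
      Real.log_le_sub_one_of_pos (by positivity)
    have h2 : Real.log (p / r) = - Real.log (r / p) := by
      rw [← Real.log_inv]; congr 1; field_simp
    have h3 : p * Real.log (r / p) ≤ r - p := by
      calc p * Real.log (r / p) ≤ p * (r / p - 1) := mul_le_mul_of_nonneg_left h1 hp
        _ = r - p := by field_simp
    rw [h2]; linarith

/-- pointwise upper bound `p log (w/p) ≤ w - p`. -/
lemma term_ub {p w : ℝ} (hp : 0 ≤ p) (hw : 0 ≤ w) (hpw : p ≠ 0 → 0 < w) :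
    p * Real.log (w / p) ≤ w - p := by
  rcases eq_or_lt_of_le hp with hp0 | hp0
  · simpa [← hp0] using hw
  · rcases eq_or_lt_of_le hw with hw0 | hw0
    · exact absurd (hpw (ne_of_gt hp0)) (by rw [← hw0]; exact lt_irrefl 0)
    · have h1 : Real.log (w / p) ≤ w / p - 1 :=
        Real.log_le_sub_one_of_pos (by positivity)
      have := mul_le_mul_of_nonneg_left h1 hp
      calc p * Real.log (w / p) ≤ p * (w / p - 1) := this
        _ = w - p := by field_simp
    
variable {𝓨 : Type} [Fintype 𝓨]

lemma KL_term_eq {q r : ℝ} (h : q ≠ 0 → r ≠ 0) :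
    q * Real.log (q / r) = q * Real.log q - q * Real.log r := by
  rcases eq_or_ne q 0 with h0 | h0
  · simp [h0]
  · rw [Real.log_div h0 (h h0)]; ring

lemma KL_expand {q r : 𝓨 → ℝ} (h : ∀ y, q y ≠ 0 → r y ≠ 0) :
    KL q r = ∑ y, (q y * Real.log (q y) - q y * Real.log (r y)) := by
  unfold KL
  exact Finset.sum_congr rfl fun y _ => KL_term_eq (h y)

lemma KL_self (p : 𝓨 → ℝ) : KL p p = 0 := by
  unfold KL
  apply Finset.sum_eq_zero
  intro y _
  rcases eq_or_ne (p y) 0 with h | h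
  · simp [h]
  · simp [div_self h]

lemma KL_nonneg {q r : 𝓨 → ℝ} (hq : IsProb q) (hr0 : ∀ y, 0 ≤ r y)
    (hr1 : ∑ y, r y ≤ 1) (h : ∀ y, q y ≠ 0 → 0 < r y) : 0 ≤ KL q r := by
  have : ∑ y, (q y - r y) ≤ KL q r :=
    Finset.sum_le_sum fun y _ => term_lb (hq.1 y) (hr0 y) (h y)
  have hs : ∑ y, (q y - r y) = 1 - ∑ y, r y := by
    rw [Finset.sum_sub_distrib, hq.2]
  linarith

/-- `∑ p log(w/p) ≤ log ∑ w` (log-sum / Jensen). -/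
lemma sum_log_le {p w : 𝓨 → ℝ} (hp : IsProb p) (hw : ∀ y, 0 ≤ w y)
    (h : ∀ y, p y ≠ 0 → 0 < w y) :
    ∑ y, p y * Real.log (w y / p y) ≤ Real.log (∑ y, w y) := by
  set Z := ∑ y, w y with hZ
  have hy0 : ∃ y, p y ≠ 0 := by
    by_contra hc
    push_neg at hc
    have : (1:ℝ) = 0 := by rw [← hp.2]; exact Finset.sum_eq_zero fun y _ => hc y
    norm_num at this
  obtain ⟨y0, hy0⟩ := hy0
  have hZpos : 0 < Z := by
    apply Finset.sum_pos' (fun y _ => hw y) ⟨y0, Finset.mem_univ _, h y0 hy0⟩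
  have key : ∀ y, p y * Real.log (w y / p y) - p y * Real.log Z ≤ w y / Z - p y := by
    intro y
    rcases eq_or_ne (p y) 0 with h0 | h0
    · simp only [h0, zero_mul, sub_zero, zero_sub, sub_zero]
      have : (0:ℝ) ≤ w y / Z := div_nonneg (hw y) hZpos.le
      linarith
    · have hwy : 0 < w y := h y h0
      have : p y * Real.log (w y / p y) - p y * Real.log Z
          = p y * Real.log ((w y / Z) / p y) := by
        rw [show (w y / Z) / p y = (w y / p y) / Z by ring,
          Real.log_div (by positivity) (ne_of_gt hZpos)]
        ring
      rw [this]
      exact term_ub (hp.1 y) (by positivity) (fun _ => by positivity)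
  have hsum := Finset.sum_le_sum fun y (_ : y ∈ Finset.univ) => key y
  rw [Finset.sum_sub_distrib, ← Finset.sum_mul, hp.2, Finset.sum_sub_distrib,
    ← Finset.sum_div, hp.2] at hsum
  simp only [one_mul, ← hZ] at hsum
  have : Z / Z = 1 := div_self (ne_of_gt hZpos)
  linarith [hsum, this.le]

/-- `2 B(μ, r) ≤ KL(p‖μ) + KL(p‖r)`. -/
lemma two_Bhat_le {μ r p : 𝓨 → ℝ} (hμ : IsProb μ) (hμf : FullSupport μ)
    (hp : IsProb p) (hr0 : ∀ y, 0 ≤ r y)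
    (h : ∀ y, p y ≠ 0 → 0 < r y) :
    2 * Bhat μ r ≤ KL p μ + KL p r := by
  set w : 𝓨 → ℝ := fun y => Real.sqrt (μ y) * Real.sqrt (r y) with hwdef
  have hw0 : ∀ y, 0 ≤ w y := fun y => by positivity
  have hwpos : ∀ y, p y ≠ 0 → 0 < w y := by
    intro y hy
    have h1 := hμf y
    have h2 := h y hy
    simp only [hwdef]
    positivity
  have key : ∀ y, p y * Real.log (p y / μ y) + p y * Real.log (p y / r y)
      = -2 * (p y * Real.log (w y / p y)) := by
    intro y
    rcases eq_or_ne (p y) 0 with h0 | h0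
    · simp [h0]
    · have hppos : 0 < p y := lt_of_le_of_ne (hp.1 y) (Ne.symm h0)
      have hrpos : 0 < r y := h y h0
      have hμpos : 0 < μ y := hμf y
      have hlw : Real.log (w y) = Real.log (μ y) / 2 + Real.log (r y) / 2 := by
        rw [hwdef, Real.log_mul (by positivity) (by positivity),
          Real.log_sqrt hμpos.le, Real.log_sqrt hrpos.le]
      rw [Real.log_div h0 (ne_of_gt hμpos), Real.log_div h0 (ne_of_gt hrpos),
        Real.log_div (ne_of_gt (hwpos y h0)) h0, hlw]
      ring
  have hsum : KL p μ + KL p r = -2 * ∑ y, p y * Real.log (w y / p y) := by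
    unfold KL
    rw [← Finset.sum_add_distrib, Finset.mul_sum]
    exact Finset.sum_congr rfl fun y _ => key y
  rw [hsum]
  have := sum_log_le hp hw0 hwpos
  unfold Bhat
  rw [hwdef]
  nlinarith [this]

/-- chain-rule style difference formula. -/
lemma KL_diff {q r₁ r₂ : 𝓨 → ℝ} (h₁ : ∀ y, q y ≠ 0 → r₁ y ≠ 0)
    (h₂ : ∀ y, q y ≠ 0 → r₂ y ≠ 0) :
    KL q r₁ = KL q r₂ + ∑ y, q y * (Real.log (r₂ y) - Real.log (r₁ y)) := by
  rw [KL_expand h₁, KL_expand h₂, ← Finset.sum_add_distrib]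
  exact Finset.sum_congr rfl fun y _ => by ring


section Mix

variable {M : ℕ} {T : ℕ}

lemma card_compl {S : Finset (Fin M)} (hS : S.card = T) :
    (Finset.univ \ S).card = M - T := by
  rw [Finset.card_sdiff_of_subset (Finset.subset_univ S), Finset.card_univ, Fintype.card_fin, hS]

lemma cast_MT (hT : T ≤ M) : ((M - T : ℕ) : ℝ) = (M : ℝ) - T := by
  rw [Nat.cast_sub hT]

variable {q : Fin M → 𝓨 → ℝ} {S : Finset (Fin M)}

lemma mixS_nonneg (hq : ∀ k, IsProb (q k)) (hc : 0 < (M : ℝ) - T) :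
    ∀ y, 0 ≤ mixS T q S y := by
  intro y
  apply div_nonneg _ hc.le
  exact Finset.sum_nonneg fun k _ => (hq k).1 y

lemma mixS_sum (hq : ∀ k, IsProb (q k)) (hS : S.card = T) (hT : T ≤ M)
    (hc : 0 < (M : ℝ) - T) : ∑ y, mixS T q S y = 1 := by
  unfold mixS
  rw [← Finset.sum_div]
  rw [Finset.sum_comm]
  have : ∑ k ∈ Finset.univ \ S, ∑ y, q k y = ((M : ℝ) - T) := by
    rw [Finset.sum_congr rfl fun k _ => (hq k).2, Finset.sum_const, card_compl hS,
      nsmul_eq_mul, mul_one, cast_MT hT]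
  rw [this, div_self (ne_of_gt hc)]

lemma le_mixS (hq : ∀ k, IsProb (q k)) (hc : 0 < (M : ℝ) - T)
    {k : Fin M} (hk : k ∈ Finset.univ \ S) (y : 𝓨) :
    q k y ≤ ((M : ℝ) - T) * mixS T q S y := by
  unfold mixS
  rw [mul_div_cancel₀ _ (ne_of_gt hc)]
  exact Finset.single_le_sum (fun j _ => (hq j).1 y) hk

lemma mixS_pos_of (hq : ∀ k, IsProb (q k)) (hc : 0 < (M : ℝ) - T)
    {k : Fin M} (hk : k ∈ Finset.univ \ S) {y : 𝓨} (hy : q k y ≠ 0) :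
    0 < mixS T q S y := by
  have h1 : 0 < q k y := lt_of_le_of_ne ((hq k).1 y) (Ne.symm hy)
  have h2 := le_mixS hq hc hk y
  nlinarith

lemma sum_mul_mixS (hc : 0 < (M : ℝ) - T) (y : 𝓨) :
    ∑ k ∈ Finset.univ \ S, q k y = ((M : ℝ) - T) * mixS T q S y := by
  unfold mixS
  rw [mul_div_cancel₀ _ (ne_of_gt hc)]

/-- Compensation identity. -/
lemma comp_identity {π : 𝓨 → ℝ} (hq : ∀ k, IsProb (q k)) (hπf : FullSupport π)
    (hc : 0 < (M : ℝ) - T) :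
    ∑ k ∈ Finset.univ \ S, KL (q k) π
      = (∑ k ∈ Finset.univ \ S, KL (q k) (mixS T q S))
        + ((M : ℝ) - T) * KL (mixS T q S) π := by
  have hterm : ∀ k ∈ Finset.univ \ S, KL (q k) π
      = KL (q k) (mixS T q S)
        + ∑ y, q k y * (Real.log (mixS T q S y) - Real.log (π y)) := by
    intro k hk
    exact KL_diff (fun y hy => ne_of_gt (hπf y))
      (fun y hy => ne_of_gt (mixS_pos_of hq hc hk hy))
  rw [Finset.sum_congr rfl hterm, Finset.sum_add_distrib]
  congr 1
  rw [Finset.sum_comm]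
  have : ∀ y, ∑ k ∈ Finset.univ \ S, q k y * (Real.log (mixS T q S y) - Real.log (π y))
      = ((M : ℝ) - T) * (mixS T q S y * (Real.log (mixS T q S y) - Real.log (π y))) := by
    intro y
    rw [← Finset.sum_mul, sum_mul_mixS hc, mul_assoc]
  rw [Finset.sum_congr rfl fun y _ => this y, ← Finset.mul_sum]
  congr 1
  rw [KL_expand fun y hy => ne_of_gt (hπf y)]
  exact Finset.sum_congr rfl fun y _ => by ring

end Mix


section Topology

def ent (p : 𝓨 → ℝ) : ℝ := ∑ y, p y * Real.log (p y)

lemma continuous_ent : Continuous (ent (𝓨 := 𝓨)) := by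
  apply continuous_finset_sum
  intro y _
  exact Real.continuous_mul_log.comp (continuous_apply y)

def KLr (p r : 𝓨 → ℝ) : ℝ := ∑ y, (p y * Real.log (p y) - p y * Real.log (r y))

lemma continuous_KLr (r : 𝓨 → ℝ) : Continuous fun p : 𝓨 → ℝ => KLr p r := by
  apply continuous_finset_sum
  intro y _
  exact (Real.continuous_mul_log.comp (continuous_apply y)).sub
    ((continuous_apply y).mul continuous_const)

lemma KL_eq_KLr {p r : 𝓨 → ℝ} (hr : ∀ y, r y ≠ 0) : KL p r = KLr p r :=
  KL_expand fun y _ => hr y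

def simplex (𝓨 : Type) [Fintype 𝓨] : Set (𝓨 → ℝ) := {p | IsProb p}

lemma isClosed_simplex : IsClosed (simplex 𝓨) := by
  have : simplex 𝓨 = (⋂ y, {p : 𝓨 → ℝ | 0 ≤ p y}) ∩ {p | ∑ y, p y = 1} := by
    ext p; simp [simplex, IsProb, Set.mem_iInter]
  rw [this]
  exact (isClosed_iInter fun y => isClosed_le continuous_const (continuous_apply y)).inter
    (isClosed_eq (continuous_finset_sum _ fun y _ => continuous_apply y) continuous_const)

lemma isCompact_simplex : IsCompact (simplex 𝓨) := by
  apply IsCompact.of_isClosed_subset (isCompact_univ_pi fun _ : 𝓨 => isCompact_Icc)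
    isClosed_simplex
  intro p hp
  rw [Set.mem_univ_pi]
  intro y
  refine ⟨hp.1 y, ?_⟩
  calc p y ≤ ∑ i, p i := Finset.single_le_sum (fun i _ => hp.1 i) (Finset.mem_univ y)
    _ = 1 := hp.2

variable {M : ℕ}

def defD (M : ℕ) (𝓨 : Type) [Fintype 𝓨] : Set (Fin M → 𝓨 → ℝ) := {q | ∀ k, IsProb (q k)}

lemma isCompact_defD : IsCompact (defD M 𝓨) := by
  have : defD M 𝓨 = Set.univ.pi fun _ : Fin M => simplex 𝓨 := by
    ext q; simp [defD, Set.mem_univ_pi, simplex]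
  rw [this]
  exact isCompact_univ_pi fun _ => isCompact_simplex

def gSfun (T : ℕ) (S : Finset (Fin M)) (q : Fin M → 𝓨 → ℝ) : ℝ :=
  (∑ k ∈ Finset.univ \ S, ent (q k)) - ((M : ℝ) - T) * ent (mixS T q S)

lemma continuous_mixS (T : ℕ) (S : Finset (Fin M)) :
    Continuous fun q : Fin M → 𝓨 → ℝ => mixS T q S := by
  apply continuous_pi
  intro y
  unfold mixS
  apply Continuous.div_const
  exact continuous_finset_sum _ fun k _ => (continuous_apply y).comp (continuous_apply k)

lemma continuous_gSfun (T : ℕ) (S : Finset (Fin M)) :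
    Continuous (gSfun (𝓨 := 𝓨) T S) := by
  apply Continuous.sub
  · exact continuous_finset_sum _ fun k _ => continuous_ent.comp (continuous_apply k)
  · exact continuous_const.mul (continuous_ent.comp (continuous_mixS T S))

lemma gS_eq {T : ℕ} {q : Fin M → 𝓨 → ℝ} {S : Finset (Fin M)}
    (hq : ∀ k, IsProb (q k)) (hc : 0 < (M : ℝ) - T) :
    ∑ k ∈ Finset.univ \ S, KL (q k) (mixS T q S) = gSfun T S q := by
  have hterm : ∀ k ∈ Finset.univ \ S, KL (q k) (mixS T q S)
      = ent (q k) - ∑ y, q k y * Real.log (mixS T q S y) := by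
    intro k hk
    rw [KL_expand fun y hy => ne_of_gt (mixS_pos_of hq hc hk hy), Finset.sum_sub_distrib]
    rfl
  rw [Finset.sum_congr rfl hterm, Finset.sum_sub_distrib]
  unfold gSfun
  congr 1
  rw [Finset.sum_comm]
  rw [Finset.sum_congr rfl fun y (_ : y ∈ Finset.univ) => by
    rw [← Finset.sum_mul, sum_mul_mixS hc]]
  unfold ent
  rw [Finset.mul_sum]
  exact Finset.sum_congr rfl fun y _ => by ring

def objF (μ : Fin M → 𝓨 → ℝ) (π : 𝓨 → ℝ) (S : Finset (Fin M)) (q : Fin M → 𝓨 → ℝ) : ℝ :=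
  ∑ i ∈ S, KLr (q i) (μ i) + ∑ j ∈ Finset.univ \ S, KLr (q j) π

lemma continuous_objF (μ : Fin M → 𝓨 → ℝ) (π : 𝓨 → ℝ) (S : Finset (Fin M)) :
    Continuous (objF μ π S) := by
  apply Continuous.add
  · exact continuous_finset_sum _ fun i _ => (continuous_KLr (μ i)).comp (continuous_apply i)
  · exact continuous_finset_sum _ fun j _ => (continuous_KLr π).comp (continuous_apply j)

lemma objF_eq {μ : Fin M → 𝓨 → ℝ} {π : 𝓨 → ℝ} {S : Finset (Fin M)}
    (hμf : ∀ i, FullSupport (μ i)) (hπf : FullSupport π) (q : Fin M → 𝓨 → ℝ) :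
    ∑ i ∈ S, KL (q i) (μ i) + ∑ j ∈ Finset.univ \ S, KL (q j) π = objF μ π S q := by
  unfold objF
  congr 1
  · exact Finset.sum_congr rfl fun i _ => KL_eq_KLr fun y => ne_of_gt (hμf i y)
  · exact Finset.sum_congr rfl fun j _ => KL_eq_KLr fun y => ne_of_gt (hπf y)

lemma alphaSet_eq_biUnion (M T : ℕ) (μ : Fin M → 𝓨 → ℝ) (π : 𝓨 → ℝ)
    (hμf : ∀ i, FullSupport (μ i)) (hπf : FullSupport π) (hc : 0 < (M : ℝ) - T) :
    alphaSet M T μ π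
      = ⋃ p ∈ {p : Finset (Fin M) × Finset (Fin M) |
          p.1.card = T ∧ p.2.card = T ∧ p.1 ≠ p.2},
          objF μ π p.1 '' (defD M 𝓨 ∩ {q | gSfun T p.2 q ≤ gSfun T p.1 q}) := by
  ext x
  simp only [Set.mem_iUnion, Set.mem_image, Set.mem_setOf_eq, Set.mem_inter_iff]
  constructor
  · rintro ⟨S, S', h1, h2, h3, q, hq, hcon, hx⟩
    refine ⟨(S, S'), ⟨h1, h2, h3⟩, q, ⟨hq, ?_⟩, ?_⟩
    · rw [← gS_eq hq hc, ← gS_eq hq hc]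
      exact hcon
    · rw [← objF_eq hμf hπf q, hx]
  · rintro ⟨⟨S, S'⟩, ⟨h1, h2, h3⟩, q, ⟨hq, hcon⟩, hx⟩
    refine ⟨S, S', h1, h2, h3, q, hq, ?_, ?_⟩
    · rw [gS_eq hq hc, gS_eq hq hc]
      exact hcon
    · rw [← hx, ← objF_eq hμf hπf q]

lemma alphaSet_isCompact (M T : ℕ) (μ : Fin M → 𝓨 → ℝ) (π : 𝓨 → ℝ)
    (hμf : ∀ i, FullSupport (μ i)) (hπf : FullSupport π) (hc : 0 < (M : ℝ) - T) :
    IsCompact (alphaSet M T μ π) := by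
  rw [alphaSet_eq_biUnion M T μ π hμf hπf hc]
  apply Set.Finite.isCompact_biUnion (Set.toFinite _)
  intro p _
  apply IsCompact.image _ (continuous_objF μ π p.1)
  exact isCompact_defD.inter_right
    (isClosed_le (continuous_gSfun T p.2) (continuous_gSfun T p.1))

end Topology


section LB

lemma iInf_eq_inf' {ι : Type} [Fintype ι] [Nonempty ι] (f : ι → ℝ) :
    (⨅ i, f i) = Finset.univ.inf' Finset.univ_nonempty f := by
  apply le_antisymm
  · obtain ⟨i₀, _, h⟩ := Finset.exists_mem_eq_inf' Finset.univ_nonempty f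
    rw [h]
    exact ciInf_le (Set.finite_range f).bddBelow i₀
  · exact le_ciInf fun i => Finset.inf'_le f (Finset.mem_univ i)

lemma continuousOn_inf' {ι X : Type} [TopologicalSpace X] (s : Finset ι) (hs : s.Nonempty)
    (f : ι → X → ℝ) (K : Set X) (hf : ∀ i, ContinuousOn (f i) K) :
    ContinuousOn (fun x => s.inf' hs fun i => f i x) K := by
  induction hs using Finset.Nonempty.cons_induction with
  | singleton a =>
    have : (fun x => ({a} : Finset ι).inf' (Finset.singleton_nonempty a) fun i => f i x)
        = f a := funext fun x => Finset.inf'_singleton _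
    rw [this]
    exact hf a
  | cons a s ha hs ih =>
    have : (fun x => (Finset.cons a s ha).inf' (Finset.cons_nonempty ha) fun i => f i x)
        = fun x => f a x ⊓ s.inf' hs fun i => f i x :=
      funext fun x => Finset.inf'_cons hs _
    rw [this]
    exact continuous_inf.comp_continuousOn ((hf a).prodMk ih)

lemma sqrtsum_pos {μ q : 𝓨 → ℝ} (hμf : FullSupport μ) (hq : IsProb q) :
    0 < ∑ y, Real.sqrt (μ y) * Real.sqrt (q y) := by
  have hy0 : ∃ y, 0 < q y := by
    by_contra hc
    push_neg at hc
    have : ∑ y, q y = 0 :=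
      Finset.sum_eq_zero fun y _ => le_antisymm (hc y) (hq.1 y)
    rw [hq.2] at this; norm_num at this
  obtain ⟨y0, hy0⟩ := hy0
  apply Finset.sum_pos' (fun y _ => by positivity)
  refine ⟨y0, Finset.mem_univ _, ?_⟩
  have := hμf y0
  positivity

lemma continuousOn_bhatmin {M : ℕ} [Nonempty (Fin M)] (μ : Fin M → 𝓨 → ℝ)
    (hμf : ∀ i, FullSupport (μ i)) :
    ContinuousOn (fun q : 𝓨 → ℝ => ⨅ i : Fin M, 2 * Bhat (μ i) q) (simplex 𝓨) := by
  have heq : (fun q : 𝓨 → ℝ => ⨅ i : Fin M, 2 * Bhat (μ i) q)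
      = fun q => Finset.univ.inf' Finset.univ_nonempty fun i => 2 * Bhat (μ i) q :=
    funext fun q => iInf_eq_inf' _
  rw [heq]
  apply continuousOn_inf'
  intro i
  have hinner : Continuous fun q : 𝓨 → ℝ => ∑ y, Real.sqrt (μ i y) * Real.sqrt (q y) :=
    continuous_finset_sum _ fun y _ =>
      continuous_const.mul (Real.continuous_sqrt.comp (continuous_apply y))
  have hlog : ContinuousOn (fun q : 𝓨 → ℝ =>
      Real.log (∑ y, Real.sqrt (μ i y) * Real.sqrt (q y))) (simplex 𝓨) := by
    apply Real.continuousOn_log.comp hinner.continuousOn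
    intro q hq
    exact Set.mem_compl_singleton_iff.mpr (ne_of_gt (sqrtsum_pos (hμf i) hq))
  exact continuousOn_const.mul hlog.neg

lemma LB_isLeast {M : ℕ} [Nonempty (Fin M)] (μ : Fin M → 𝓨 → ℝ) (π : 𝓨 → ℝ) (β : ℝ)
    (hβ : 0 ≤ β) (hπ : IsProb π) (hπf : FullSupport π) (hμf : ∀ i, FullSupport (μ i)) :
    ∃ L, IsLeast {x : ℝ | ∃ q : 𝓨 → ℝ, IsProb q ∧ KL q π ≤ β ∧
      x = ⨅ i : Fin M, 2 * Bhat (μ i) q} L := by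
  set K : Set (𝓨 → ℝ) := simplex 𝓨 ∩ {q | KLr q π ≤ β} with hK
  have hπne : ∀ y, π y ≠ 0 := fun y => ne_of_gt (hπf y)
  have hKc : IsCompact K :=
    isCompact_simplex.inter_right (isClosed_le (continuous_KLr π) continuous_const)
  have hKne : K.Nonempty := by
    refine ⟨π, hπ, ?_⟩
    simp only [Set.mem_setOf_eq, ← KL_eq_KLr hπne, KL_self]
    exact hβ
  set f : (𝓨 → ℝ) → ℝ := fun q => ⨅ i : Fin M, 2 * Bhat (μ i) q with hf
  have himg : {x : ℝ | ∃ q : 𝓨 → ℝ, IsProb q ∧ KL q π ≤ β ∧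
      x = ⨅ i : Fin M, 2 * Bhat (μ i) q} = f '' K := by
    ext x
    constructor
    · rintro ⟨q, h1, h2, h3⟩
      exact ⟨q, ⟨h1, by rwa [Set.mem_setOf_eq, ← KL_eq_KLr hπne]⟩, h3.symm⟩
    · rintro ⟨q, ⟨h1, h2⟩, h3⟩
      exact ⟨q, h1, by rwa [KL_eq_KLr hπne], h3.symm⟩
  rw [himg]
  exact (hKc.image_of_continuousOn
    ((continuousOn_bhatmin μ hμf).mono Set.inter_subset_left)).exists_isLeast
    (hKne.image f)

end LB

section ChernoffFacts

variable {Z : Type} [Fintype Z] [Nonempty Z]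

lemma chernoff_le (P Q : Z → ℝ) (hP : ∀ z, 0 < P z) (hQ : ∀ z, 0 < Q z)
    {s : ℝ} (hs : s ∈ Set.Icc (0:ℝ) 1) :
    - Real.log (∑ z, P z ^ s * Q z ^ (1 - s)) ≤ Chernoff P Q := by
  set F : ℝ → ℝ := fun t => - Real.log (∑ z, P z ^ t * Q z ^ (1 - t)) with hF
  have hGz : ∀ z, Continuous fun t : ℝ => P z ^ t * Q z ^ (1 - t) := by
    intro z
    have h1 : (fun t : ℝ => P z ^ t * Q z ^ (1 - t))
        = fun t : ℝ => Real.exp (Real.log (P z) * t) * Real.exp (Real.log (Q z) * (1 - t)) := by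
      funext t
      rw [Real.rpow_def_of_pos (hP z), Real.rpow_def_of_pos (hQ z)]
    rw [h1]
    exact (Real.continuous_exp.comp (continuous_const.mul continuous_id)).mul
      (Real.continuous_exp.comp (continuous_const.mul (continuous_const.sub continuous_id)))
  have hG : Continuous fun t : ℝ => ∑ z, P z ^ t * Q z ^ (1 - t) :=
    continuous_finset_sum _ fun z _ => hGz z
  have hGpos : ∀ t : ℝ, 0 < ∑ z, P z ^ t * Q z ^ (1 - t) := by
    intro t
    apply Finset.sum_pos (fun z _ => by
      have h1 := Real.rpow_pos_of_pos (hP z) t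
      have h2 := Real.rpow_pos_of_pos (hQ z) (1 - t)
      positivity) Finset.univ_nonempty
  have hFc : ContinuousOn F (Set.Icc (0:ℝ) 1) := by
    apply ContinuousOn.neg
    apply Real.continuousOn_log.comp hG.continuousOn
    intro t _
    exact Set.mem_compl_singleton_iff.mpr (ne_of_gt (hGpos t))
  have hbdd : BddAbove (Set.range fun t : Set.Icc (0:ℝ) 1 =>
      - Real.log (∑ z, P z ^ (t:ℝ) * Q z ^ (1 - (t:ℝ)))) := by
    have h2 : (Set.range fun t : Set.Icc (0:ℝ) 1 =>
        - Real.log (∑ z, P z ^ (t:ℝ) * Q z ^ (1 - (t:ℝ)))) = F '' Set.Icc 0 1 := by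
      rw [Set.image_eq_range]
    rw [h2]
    exact (isCompact_Icc.image_of_continuousOn hFc).bddAbove
  exact le_ciSup hbdd ⟨s, hs⟩

lemma chernoff_nonneg (P Q : Z → ℝ) (hP : ∀ z, 0 < P z) (hQ : ∀ z, 0 < Q z)
    (hQ1 : ∑ z, Q z = 1) : 0 ≤ Chernoff P Q := by
  have h := chernoff_le P Q hP hQ (s := 0) ⟨le_refl 0, zero_le_one⟩
  have h2 : ∑ z, P z ^ (0:ℝ) * Q z ^ (1 - (0:ℝ)) = 1 := by
    calc ∑ z, P z ^ (0:ℝ) * Q z ^ (1 - (0:ℝ)) = ∑ z, Q z := by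
          apply Finset.sum_congr rfl
          intro z _
          rw [Real.rpow_zero, sub_zero, Real.rpow_one, one_mul]
      _ = 1 := hQ1
  rwa [h2, Real.log_one, neg_zero] at h

end ChernoffFacts


section Tilt

variable [Nonempty 𝓨]

def tZ (p r : 𝓨 → ℝ) (s : ℝ) : ℝ := ∑ y, p y ^ s * r y ^ (1 - s)

def tdist (p r : 𝓨 → ℝ) (s : ℝ) : 𝓨 → ℝ := fun y => p y ^ s * r y ^ (1 - s) / tZ p r s

def tA (p r : 𝓨 → ℝ) (s : ℝ) : ℝ :=
  ∑ y, tdist p r s y * (Real.log (p y) - Real.log (r y))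

variable {p r : 𝓨 → ℝ}

lemma tnum_pos (hp : FullSupport p) (hr : FullSupport r) (s : ℝ) (y : 𝓨) :
    0 < p y ^ s * r y ^ (1 - s) :=
  mul_pos (Real.rpow_pos_of_pos (hp y) s) (Real.rpow_pos_of_pos (hr y) (1 - s))

lemma tZ_pos (hp : FullSupport p) (hr : FullSupport r) (s : ℝ) : 0 < tZ p r s :=
  Finset.sum_pos (fun y _ => tnum_pos hp hr s y) Finset.univ_nonempty

lemma tdist_pos (hp : FullSupport p) (hr : FullSupport r) (s : ℝ) :
    FullSupport (tdist p r s) := fun y =>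
  div_pos (tnum_pos hp hr s y) (tZ_pos hp hr s)

lemma tdist_isProb (hp : FullSupport p) (hr : FullSupport r) (s : ℝ) :
    IsProb (tdist p r s) := by
  constructor
  · exact fun y => (tdist_pos hp hr s y).le
  · unfold tdist
    rw [← Finset.sum_div]
    exact div_self (ne_of_gt (tZ_pos hp hr s))

lemma log_tdist (hp : FullSupport p) (hr : FullSupport r) (s : ℝ) (y : 𝓨) :
    Real.log (tdist p r s y)
      = s * Real.log (p y) + (1 - s) * Real.log (r y) - Real.log (tZ p r s) := by
  unfold tdist
  rw [Real.log_div (ne_of_gt (tnum_pos hp hr s y)) (ne_of_gt (tZ_pos hp hr s)),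
    Real.log_mul (ne_of_gt (Real.rpow_pos_of_pos (hp y) s))
      (ne_of_gt (Real.rpow_pos_of_pos (hr y) (1 - s))),
    Real.log_rpow (hp y), Real.log_rpow (hr y)]

lemma KL_tdist_left (hp : FullSupport p) (hr : FullSupport r) (s : ℝ) :
    KL (tdist p r s) p = -(1 - s) * tA p r s - Real.log (tZ p r s) := by
  rw [KL_expand fun y _ => ne_of_gt (hp y)]
  have hterm : ∀ y, tdist p r s y * Real.log (tdist p r s y)
      - tdist p r s y * Real.log (p y)
      = -(1 - s) * (tdist p r s y * (Real.log (p y) - Real.log (r y)))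
        + tdist p r s y * (- Real.log (tZ p r s)) := by
    intro y
    rw [log_tdist hp hr s y]
    ring
  rw [Finset.sum_congr rfl fun y _ => hterm y, Finset.sum_add_distrib,
    ← Finset.mul_sum, ← Finset.sum_mul, (tdist_isProb hp hr s).2, one_mul]
  unfold tA
  ring

lemma KL_tdist_right (hp : FullSupport p) (hr : FullSupport r) (s : ℝ) :
    KL (tdist p r s) r = s * tA p r s - Real.log (tZ p r s) := by
  rw [KL_expand fun y _ => ne_of_gt (hr y)]
  have hterm : ∀ y, tdist p r s y * Real.log (tdist p r s y)
      - tdist p r s y * Real.log (r y)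
      = s * (tdist p r s y * (Real.log (p y) - Real.log (r y)))
        + tdist p r s y * (- Real.log (tZ p r s)) := by
    intro y
    rw [log_tdist hp hr s y]
    ring
  rw [Finset.sum_congr rfl fun y _ => hterm y, Finset.sum_add_distrib,
    ← Finset.mul_sum, ← Finset.sum_mul, (tdist_isProb hp hr s).2, one_mul]
  unfold tA
  ring

lemma continuous_tnum (hp : FullSupport p) (hr : FullSupport r) (y : 𝓨) :
    Continuous fun s : ℝ => p y ^ s * r y ^ (1 - s) := by
  have h1 : (fun s : ℝ => p y ^ s * r y ^ (1 - s))
      = fun s : ℝ => Real.exp (Real.log (p y) * s) * Real.exp (Real.log (r y) * (1 - s)) := by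
    funext s
    rw [Real.rpow_def_of_pos (hp y), Real.rpow_def_of_pos (hr y)]
  rw [h1]
  exact (Real.continuous_exp.comp (continuous_const.mul continuous_id)).mul
    (Real.continuous_exp.comp (continuous_const.mul (continuous_const.sub continuous_id)))

lemma continuous_tA (hp : FullSupport p) (hr : FullSupport r) :
    Continuous (tA p r) := by
  have heq : tA p r = fun s =>
      (∑ y, (p y ^ s * r y ^ (1 - s)) * (Real.log (p y) - Real.log (r y))) / tZ p r s := by
    funext s
    unfold tA tdist
    rw [Finset.sum_div]
    exact Finset.sum_congr rfl fun y _ => by ring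
  rw [heq]
  apply Continuous.div
  · exact continuous_finset_sum _ fun y _ => (continuous_tnum hp hr y).mul continuous_const
  · exact continuous_finset_sum _ fun y _ => continuous_tnum hp hr y
  · exact fun s => ne_of_gt (tZ_pos hp hr s)

lemma tZ_zero (hr1 : ∑ y, r y = 1) : tZ p r 0 = 1 := by
  unfold tZ
  calc ∑ y, p y ^ (0:ℝ) * r y ^ (1 - (0:ℝ)) = ∑ y, r y :=
        Finset.sum_congr rfl fun y _ => by
          rw [Real.rpow_zero, sub_zero, Real.rpow_one, one_mul]
    _ = 1 := hr1

lemma tZ_one (hp1 : ∑ y, p y = 1) : tZ p r 1 = 1 := by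
  unfold tZ
  calc ∑ y, p y ^ (1:ℝ) * r y ^ (1 - (1:ℝ)) = ∑ y, p y :=
        Finset.sum_congr rfl fun y _ => by
          rw [Real.rpow_one, sub_self, Real.rpow_zero, mul_one]
    _ = 1 := hp1

lemma tdist_zero (hr1 : ∑ y, r y = 1) : tdist p r 0 = r := by
  funext y
  unfold tdist
  rw [tZ_zero hr1, Real.rpow_zero, sub_zero, Real.rpow_one, one_mul, div_one]

lemma tdist_one (hp1 : ∑ y, p y = 1) : tdist p r 1 = p := by
  funext y
  unfold tdist
  rw [tZ_one hp1, Real.rpow_one, sub_self, Real.rpow_zero, mul_one, div_one]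

lemma tA_zero (hp : FullSupport p) (hr1 : ∑ y, r y = 1) : tA p r 0 = - KL r p := by
  unfold tA
  rw [tdist_zero hr1, KL_expand fun y _ => ne_of_gt (hp y), ← Finset.sum_neg_distrib]
  exact Finset.sum_congr rfl fun y _ => by ring

lemma tA_one (hr : FullSupport r) (hp1 : ∑ y, p y = 1) : tA p r 1 = KL p r := by
  unfold tA
  rw [tdist_one hp1, KL_expand fun y _ => ne_of_gt (hr y)]
  exact Finset.sum_congr rfl fun y _ => by ring

end Tilt


section Achiev

variable [Nonempty 𝓨] {M T : ℕ}

lemma achiev (hT1 : 1 < T) (hT2 : 2 * T < M)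
    (μ : Fin M → 𝓨 → ℝ) (π : 𝓨 → ℝ)
    (hμ : ∀ i, IsProb (μ i)) (hπ : IsProb π)
    (hμf : ∀ i, FullSupport (μ i)) (hπf : FullSupport π)
    (i j : Fin M) (hij : i ≠ j) :
    ∃ x ∈ alphaSet M T μ π,
      x ≤ Chernoff (fun z : 𝓨 × 𝓨 => μ i z.1 * π z.2)
        (fun z : 𝓨 × 𝓨 => π z.1 * μ j z.2) := by
  classical
  -- construct S and S'
  have hcard2 : ({i, j} : Finset (Fin M)).card = 2 := by
    rw [Finset.card_insert_of_notMem (by simp [hij]), Finset.card_singleton]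
  have hM2 : T - 1 ≤ (Finset.univ \ ({i, j} : Finset (Fin M))).card := by
    rw [Finset.card_sdiff_of_subset (Finset.subset_univ _), Finset.card_univ, Fintype.card_fin, hcard2]
    omega
  obtain ⟨S₀, hS₀sub, hS₀card⟩ := Finset.exists_subset_card_eq hM2
  have hiS₀ : i ∉ S₀ := fun h => by
    have := hS₀sub h
    simp [Finset.mem_sdiff] at this
  have hjS₀ : j ∉ S₀ := fun h => by
    have := hS₀sub h
    simp [Finset.mem_sdiff] at this
  set S : Finset (Fin M) := insert i S₀ with hS
  set S' : Finset (Fin M) := insert j S₀ with hS'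
  have hScard : S.card = T := by
    rw [hS, Finset.card_insert_of_notMem hiS₀, hS₀card]
    omega
  have hS'card : S'.card = T := by
    rw [hS', Finset.card_insert_of_notMem hjS₀, hS₀card]
    omega
  have hiS : i ∈ S := Finset.mem_insert_self i S₀
  have hjS' : j ∈ S' := Finset.mem_insert_self j S₀
  have hjS : j ∉ S := by
    rw [hS, Finset.mem_insert]
    push_neg
    exact ⟨hij.symm, hjS₀⟩
  have hiS' : i ∉ S' := by
    rw [hS', Finset.mem_insert]
    push_neg
    exact ⟨hij, hiS₀⟩
  have hSS' : S ≠ S' := fun h => hjS (h ▸ hjS')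
  -- the crossing point
  set Φ : ℝ → ℝ := fun s => tA (μ i) π s + tA π (μ j) s with hΦ
  have hΦc : Continuous Φ := (continuous_tA (hμf i) hπf).add (continuous_tA hπf (hμf j))
  have hΦ0 : Φ 0 ≤ 0 := by
    rw [hΦ]
    simp only [tA_zero (hμf i) hπ.2, tA_zero hπf (hμ j).2]
    have h1 : 0 ≤ KL π (μ i) := KL_nonneg hπ (fun y => (hμ i).1 y) (hμ i).2.le
      (fun y _ => hμf i y)
    have h2 : 0 ≤ KL (μ j) π := KL_nonneg (hμ j) (fun y => hπ.1 y) hπ.2.le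
      (fun y _ => hπf y)
    linarith
  have hΦ1 : 0 ≤ Φ 1 := by
    rw [hΦ]
    simp only [tA_one hπf (hμ i).2, tA_one (hμf j) hπ.2]
    have h1 : 0 ≤ KL (μ i) π := KL_nonneg (hμ i) (fun y => hπ.1 y) hπ.2.le
      (fun y _ => hπf y)
    have h2 : 0 ≤ KL π (μ j) := KL_nonneg hπ (fun y => (hμ j).1 y) (hμ j).2.le
      (fun y _ => hμf j y)
    linarith
  have hIVT : (0:ℝ) ∈ Φ '' Set.Icc 0 1 :=
    intermediate_value_Icc zero_le_one hΦc.continuousOn ⟨hΦ0, hΦ1⟩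
  obtain ⟨s₀, hs₀mem, hs₀⟩ := hIVT
  -- tilted distributions
  set qi : 𝓨 → ℝ := tdist (μ i) π s₀ with hqi
  set qj : 𝓨 → ℝ := tdist π (μ j) s₀ with hqj
  set q : Fin M → 𝓨 → ℝ := fun k => if k = i then qi else if k = j then qj
    else if k ∈ S then μ k else π with hq
  have hqprob : ∀ k, IsProb (q k) := by
    intro k
    rw [hq]
    by_cases h1 : k = i
    · simpa [h1] using tdist_isProb (hμf i) hπf s₀
    · by_cases h2 : k = j
      · simpa [h2, Ne.symm hij] using tdist_isProb hπf (hμf j) s₀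
      · by_cases h3 : k ∈ S <;> simp [h1, h2, h3, hμ k, hπ]
  have hqii : q i = qi := by rw [hq]; simp
  have hqjj : q j = qj := by rw [hq]; simp [hij.symm]
  have hqS₀ : ∀ k ∈ S₀, q k = μ k := by
    intro k hk
    have h1 : k ≠ i := fun h => hiS₀ (h ▸ hk)
    have h2 : k ≠ j := fun h => hjS₀ (h ▸ hk)
    have h3 : k ∈ S := Finset.mem_insert_of_mem hk
    rw [hq]
    simp [h1, h2, h3]
  have hqout : ∀ k, k ≠ i → k ≠ j → k ∉ S₀ → q k = π := by
    intro k h1 h2 h3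
    have h4 : k ∉ S := by
      rw [hS, Finset.mem_insert]
      push_neg
      exact ⟨h1, h3⟩
    rw [hq]
    simp [h1, h2, h4]
  -- the common value
  set W : ℝ := - Real.log (tZ (μ i) π s₀) - Real.log (tZ π (μ j) s₀) with hW
  have hKL1 : KL qi (μ i) = -(1 - s₀) * tA (μ i) π s₀ - Real.log (tZ (μ i) π s₀) :=
    KL_tdist_left (hμf i) hπf s₀
  have hKL2 : KL qi π = s₀ * tA (μ i) π s₀ - Real.log (tZ (μ i) π s₀) :=
    KL_tdist_right (hμf i) hπf s₀
  have hKL3 : KL qj π = -(1 - s₀) * tA π (μ j) s₀ - Real.log (tZ π (μ j) s₀) :=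
    KL_tdist_left hπf (hμf j) s₀
  have hKL4 : KL qj (μ j) = s₀ * tA π (μ j) s₀ - Real.log (tZ π (μ j) s₀) :=
    KL_tdist_right hπf (hμf j) s₀
  have hΦval : tA (μ i) π s₀ + tA π (μ j) s₀ = 0 := hs₀
  have hV : KL qi (μ i) + KL qj π = W := by
    rw [hKL1, hKL3, hW, show tA π (μ j) s₀ = - tA (μ i) π s₀ from by linarith]; ring
  have hV' : KL qj (μ j) + KL qi π = W := by
    rw [hKL4, hKL2, hW, show tA π (μ j) s₀ = - tA (μ i) π s₀ from by linarith]; ring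
  -- W is bounded by the Chernoff information
  have hWle : W ≤ Chernoff (fun z : 𝓨 × 𝓨 => μ i z.1 * π z.2)
      (fun z : 𝓨 × 𝓨 => π z.1 * μ j z.2) := by
    have hfact : ∑ z : 𝓨 × 𝓨, (μ i z.1 * π z.2) ^ s₀ * (π z.1 * μ j z.2) ^ (1 - s₀)
        = tZ (μ i) π s₀ * tZ π (μ j) s₀ := by
      rw [Fintype.sum_prod_type]
      unfold tZ
      rw [Finset.sum_mul_sum]
      apply Finset.sum_congr rfl
      intro y1 _
      apply Finset.sum_congr rfl
      intro y2 _
      rw [Real.mul_rpow ((hμf i y1).le) ((hπf y2).le),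
        Real.mul_rpow ((hπf y1).le) ((hμf j y2).le)]
      ring
    have hle := chernoff_le (fun z : 𝓨 × 𝓨 => μ i z.1 * π z.2)
      (fun z : 𝓨 × 𝓨 => π z.1 * μ j z.2)
      (fun z => mul_pos (hμf i z.1) (hπf z.2))
      (fun z => mul_pos (hπf z.1) (hμf j z.2)) hs₀mem
    rw [hfact, Real.log_mul (ne_of_gt (tZ_pos (hμf i) hπf s₀))
      (ne_of_gt (tZ_pos hπf (hμf j) s₀))] at hle
    calc W = -(Real.log (tZ (μ i) π s₀) + Real.log (tZ π (μ j) s₀)) := by rw [hW]; ring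
      _ ≤ _ := hle
  -- objective values
  have hobjS : ∑ k ∈ S, KL (q k) (μ k) + ∑ k ∈ Finset.univ \ S, KL (q k) π = W := by
    have h1 : ∑ k ∈ S, KL (q k) (μ k) = KL qi (μ i) := by
      rw [hS, Finset.sum_insert hiS₀, hqii]
      have : ∑ k ∈ S₀, KL (q k) (μ k) = 0 :=
        Finset.sum_eq_zero fun k hk => by rw [hqS₀ k hk, KL_self]
      rw [this, add_zero]
    have h2 : ∑ k ∈ Finset.univ \ S, KL (q k) π = KL qj π := by
      rw [Finset.sum_eq_single_of_mem j (by simp [Finset.mem_sdiff, hjS]) ?_, hqjj]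
      intro b hb hbj
      rw [Finset.mem_sdiff] at hb
      have hbS := hb.2
      have hbi : b ≠ i := fun h => hbS (h ▸ hiS)
      have hbS₀ : b ∉ S₀ := fun h => hbS (Finset.mem_insert_of_mem h)
      rw [hqout b hbi hbj hbS₀, KL_self]
    rw [h1, h2, hV]
  have hobjS' : ∑ k ∈ S', KL (q k) (μ k) + ∑ k ∈ Finset.univ \ S', KL (q k) π = W := by
    have h1 : ∑ k ∈ S', KL (q k) (μ k) = KL qj (μ j) := by
      rw [hS', Finset.sum_insert hjS₀, hqjj]
      have : ∑ k ∈ S₀, KL (q k) (μ k) = 0 :=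
        Finset.sum_eq_zero fun k hk => by rw [hqS₀ k hk, KL_self]
      rw [this, add_zero]
    have h2 : ∑ k ∈ Finset.univ \ S', KL (q k) π = KL qi π := by
      rw [Finset.sum_eq_single_of_mem i (by simp [Finset.mem_sdiff, hiS']) ?_, hqii]
      intro b hb hbi
      rw [Finset.mem_sdiff] at hb
      have hbS' := hb.2
      have hbj : b ≠ j := fun h => hbS' (h ▸ hjS')
      have hbS₀ : b ∉ S₀ := fun h => hbS' (Finset.mem_insert_of_mem h)
      rw [hqout b hbi hbj hbS₀, KL_self]
    rw [h1, h2]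
    linarith [hV']
  -- choose orientation according to the constraint
  rcases le_total (∑ k ∈ Finset.univ \ S', KL (q k) (mixS T q S'))
      (∑ k ∈ Finset.univ \ S, KL (q k) (mixS T q S)) with hc | hc
  · exact ⟨W, ⟨S, S', hScard, hS'card, hSS', q, hqprob, hc, hobjS.symm⟩, hWle⟩
  · exact ⟨W, ⟨S', S, hS'card, hScard, hSS'.symm, q, hqprob, hc, hobjS'.symm⟩, hWle⟩

end Achiev


/-- `KL(q‖π) ≤ KL(q‖μ) + Cπ` where `Cπ = -log min π`. -/
lemma KL_pi_le {p μ π : 𝓨 → ℝ} {y₀ : 𝓨} (hp : IsProb p) (hμ : IsProb μ)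
    (hμf : FullSupport μ) (hπf : FullSupport π) (hy₀ : ∀ y, π y₀ ≤ π y) :
    KL p π ≤ KL p μ + (- Real.log (π y₀)) := by
  rw [KL_diff (q := p) (r₁ := π) (r₂ := μ) (fun y _ => ne_of_gt (hπf y))
    (fun y _ => ne_of_gt (hμf y))]
  have hterm : ∀ y, p y * (Real.log (μ y) - Real.log (π y)) ≤ p y * (- Real.log (π y₀)) := by
    intro y
    apply mul_le_mul_of_nonneg_left _ (hp.1 y)
    have h1 : Real.log (μ y) ≤ 0 := by
      apply Real.log_nonpos (hμf y).le
      calc μ y ≤ ∑ z, μ z := Finset.single_le_sum (fun z _ => hμ.1 z) (Finset.mem_univ y)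
        _ = 1 := hμ.2
    have h2 : Real.log (π y₀) ≤ Real.log (π y) := Real.log_le_log (hπf y₀) (hy₀ y)
    linarith
  have hsum : ∑ y, p y * (Real.log (μ y) - Real.log (π y))
      ≤ ∑ y, p y * (- Real.log (π y₀)) := Finset.sum_le_sum fun y _ => hterm y
  rw [← Finset.sum_mul, hp.2, one_mul] at hsum
  linarith

end St18

open St18 in
/-- lower bound in Theorem 9. `α ≥ LB`, where `α` is the
minimum of the optimization problem of Theorem 8 and `LB` is the minimum of
`min_i 2B(μ_i,q)` over distributions `q` with
`D(q‖π) ≤ (min_{i<j} C(μᵢ⊗π, π⊗μⱼ) + T·C_π)/(M-T)`, `C_π = -log min_y π(y)`. -/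
theorem statement18 (𝓨 : Type) [Fintype 𝓨] [Nonempty 𝓨]
    (M T : ℕ) (hT1 : 1 < T) (hT2 : 2 * T < M)
    (μ : Fin M → 𝓨 → ℝ) (π : 𝓨 → ℝ)
    (hμ : ∀ i, IsProb (μ i)) (hπ : IsProb π)
    (hμf : ∀ i, FullSupport (μ i)) (hπf : FullSupport π)
    (hne : ∀ i, μ i ≠ π) :
    ∃ a L : ℝ, IsLeast (alphaSet M T μ π) a ∧
      IsLeast {x : ℝ | ∃ q : 𝓨 → ℝ, IsProb q ∧
        KL q π ≤ (1 / ((M : ℝ) - T)) *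
          ((⨅ ij : {ij : Fin M × Fin M // ij.1 < ij.2},
              Chernoff (fun z : 𝓨 × 𝓨 => μ ij.val.1 z.1 * π z.2)
                (fun z : 𝓨 × 𝓨 => π z.1 * μ ij.val.2 z.2)) +
            T * (- Real.log (⨅ y, π y))) ∧
        x = ⨅ i : Fin M, 2 * Bhat (μ i) q} L ∧
      L ≤ a := by
  classical
  haveI hMne : Nonempty (Fin M) := ⟨⟨0, by omega⟩⟩
  have hTM : T ≤ M := by omega
  have hc : 0 < (M : ℝ) - T := by
    have : (T : ℝ) < (M : ℝ) := by exact_mod_cast (by omega : T < M)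
    linarith
  haveI hpairne : Nonempty {ij : Fin M × Fin M // ij.1 < ij.2} :=
    ⟨⟨(⟨0, by omega⟩, ⟨1, by omega⟩), by simp [Fin.lt_def]⟩⟩
  set Cmin : ℝ := ⨅ ij : {ij : Fin M × Fin M // ij.1 < ij.2},
      Chernoff (fun z : 𝓨 × 𝓨 => μ ij.val.1 z.1 * π z.2)
        (fun z : 𝓨 × 𝓨 => π z.1 * μ ij.val.2 z.2) with hCmin
  set Cπ : ℝ := - Real.log (⨅ y, π y) with hCπ
  set β : ℝ := (1 / ((M : ℝ) - T)) * (Cmin + T * Cπ) with hβdef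
  have hQ1 : ∀ j : Fin M, ∑ z : 𝓨 × 𝓨, π z.1 * μ j z.2 = 1 := by
    intro j
    rw [Fintype.sum_prod_type]
    have hin : ∀ y1 : 𝓨, ∑ y2 : 𝓨, π (y1, y2).1 * μ j (y1, y2).2 = π y1 := by
      intro y1
      show ∑ y2 : 𝓨, π y1 * μ j y2 = π y1
      rw [← Finset.mul_sum, (hμ j).2, mul_one]
    rw [Finset.sum_congr rfl fun y1 _ => hin y1]
    exact hπ.2
  have hCminNonneg : 0 ≤ Cmin := by
    rw [hCmin]
    apply le_ciInf
    intro ij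
    exact chernoff_nonneg _ _ (fun z => mul_pos (hμf _ z.1) (hπf z.2))
      (fun z => mul_pos (hπf z.1) (hμf _ z.2)) (hQ1 ij.val.2)
  obtain ⟨y₀, -, hy₀min⟩ := Finset.exists_min_image Finset.univ π Finset.univ_nonempty
  have hy₀min' : ∀ y, π y₀ ≤ π y := fun y => hy₀min y (Finset.mem_univ y)
  have hinfπ : (⨅ y, π y) = π y₀ :=
    le_antisymm (ciInf_le (Set.finite_range π).bddBelow y₀) (le_ciInf hy₀min')
  have hCπNonneg : 0 ≤ Cπ := by
    rw [hCπ, hinfπ]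
    have h1 : π y₀ ≤ 1 := by
      calc π y₀ ≤ ∑ y, π y := Finset.single_le_sum (fun y _ => hπ.1 y) (Finset.mem_univ y₀)
        _ = 1 := hπ.2
    have := Real.log_nonpos (hπf y₀).le h1
    linarith
  have hβ : 0 ≤ β := by
    rw [hβdef]
    have h1 : 0 ≤ Cmin + T * Cπ := by positivity
    positivity
  have hane : (alphaSet M T μ π).Nonempty := by
    obtain ⟨x, hx, -⟩ := achiev hT1 hT2 μ π hμ hπ hμf hπf ⟨0, by omega⟩ ⟨1, by omega⟩
      (by simp [Fin.ext_iff])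
    exact ⟨x, hx⟩
  obtain ⟨a, ha⟩ := (alphaSet_isCompact M T μ π hμf hπf hc).exists_isLeast hane
  obtain ⟨L, hL⟩ := LB_isLeast μ π β hβ hπ hπf hμf
  refine ⟨a, L, ha, hL, ?_⟩
  have haCmin : a ≤ Cmin := by
    rw [hCmin]
    apply le_ciInf
    intro ij
    obtain ⟨x, hxmem, hxle⟩ := achiev hT1 hT2 μ π hμ hπ hμf hπf ij.val.1 ij.val.2
      (ne_of_lt ij.2)
    exact le_trans (ha.2 hxmem) hxle
  obtain ⟨S, S', hScard, hS'card, hSS', q, hqprob, hcon, haeq⟩ := ha.1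
  have hSdiffne : (S \ S').Nonempty := by
    rw [Finset.sdiff_nonempty]
    intro hsub
    exact hSS' (Finset.eq_of_subset_of_card_le hsub (by rw [hScard, hS'card]))
  obtain ⟨i₀, hi₀⟩ := hSdiffne
  rw [Finset.mem_sdiff] at hi₀
  obtain ⟨hi₀S, hi₀S'⟩ := hi₀
  have hi₀c : i₀ ∈ Finset.univ \ S' := Finset.mem_sdiff.mpr ⟨Finset.mem_univ _, hi₀S'⟩
  set m' : 𝓨 → ℝ := mixS T q S' with hm'
  have hm'prob : IsProb m' := ⟨mixS_nonneg hqprob hc, mixS_sum hqprob hS'card hTM hc⟩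
  have hKLμ_nonneg : ∀ k, 0 ≤ KL (q k) (μ k) := fun k =>
    KL_nonneg (hqprob k) (fun y => (hμ k).1 y) (hμ k).2.le (fun y _ => hμf k y)
  have hKLπ_nonneg : ∀ k, 0 ≤ KL (q k) π := fun k =>
    KL_nonneg (hqprob k) (fun y => hπ.1 y) hπ.2.le (fun y _ => hπf y)
  have hKLmix_nonneg : ∀ (S'' : Finset (Fin M)), S''.card = T →
      ∀ k ∈ Finset.univ \ S'', 0 ≤ KL (q k) (mixS T q S'') := by
    intro S'' hS''card k hk
    exact KL_nonneg (hqprob k) (mixS_nonneg hqprob hc)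
      (le_of_eq (mixS_sum hqprob hS''card hTM hc))
      (fun y hy => mixS_pos_of hqprob hc hk hy)
  have hBi : 2 * Bhat (μ i₀) m' ≤ KL (q i₀) (μ i₀) + KL (q i₀) m' :=
    two_Bhat_le (hμ i₀) (hμf i₀) (hqprob i₀) hm'prob.1
      (fun y hy => mixS_pos_of hqprob hc hi₀c hy)
  have hKLm'le : KL (q i₀) m' ≤ ∑ k ∈ Finset.univ \ S', KL (q k) (mixS T q S') :=
    Finset.single_le_sum (fun k hk => hKLmix_nonneg S' hS'card k hk) hi₀c
  have hFSle : ∑ k ∈ Finset.univ \ S, KL (q k) (mixS T q S)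
      ≤ ∑ k ∈ Finset.univ \ S, KL (q k) π := by
    have hid := comp_identity (S := S) hqprob hπf hc
    have hKLmπ : 0 ≤ KL (mixS T q S) π :=
      KL_nonneg ⟨mixS_nonneg hqprob hc, mixS_sum hqprob hScard hTM hc⟩
        (fun y => hπ.1 y) hπ.2.le (fun y _ => hπf y)
    have hprod : 0 ≤ ((M : ℝ) - T) * KL (mixS T q S) π := mul_nonneg hc.le hKLmπ
    linarith
  have hKLsingle : KL (q i₀) (μ i₀) ≤ ∑ k ∈ S, KL (q k) (μ k) :=
    Finset.single_le_sum (fun k _ => hKLμ_nonneg k) hi₀S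
  have h2Ba : 2 * Bhat (μ i₀) m' ≤ a := by
    rw [haeq]
    have := hcon
    linarith
  -- feasibility of m'
  have hidS' := comp_identity (S := S') hqprob hπf hc
  have hFS'nonneg : 0 ≤ ∑ k ∈ Finset.univ \ S', KL (q k) (mixS T q S') :=
    Finset.sum_nonneg (hKLmix_nonneg S' hS'card)
  have hsplit : Finset.univ \ S' = (Finset.univ \ (S ∪ S')) ∪ (S \ S') := by
    ext k
    simp only [Finset.mem_sdiff, Finset.mem_union, Finset.mem_univ, true_and]
    tauto
  have hdisj : Disjoint (Finset.univ \ (S ∪ S')) (S \ S') := by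
    rw [Finset.disjoint_left]
    intro k hk1 hk2
    rw [Finset.mem_sdiff] at hk1 hk2
    exact hk1.2 (Finset.mem_union_left _ hk2.1)
  have hsum_split : ∑ k ∈ Finset.univ \ S', KL (q k) π
      = ∑ k ∈ Finset.univ \ (S ∪ S'), KL (q k) π + ∑ k ∈ S \ S', KL (q k) π := by
    rw [hsplit, Finset.sum_union hdisj]
  have hb1 : ∑ k ∈ Finset.univ \ (S ∪ S'), KL (q k) π
      ≤ ∑ k ∈ Finset.univ \ S, KL (q k) π :=
    Finset.sum_le_sum_of_subset_of_nonneg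
      (Finset.sdiff_subset_sdiff (Finset.Subset.refl _) Finset.subset_union_left)
      (fun k _ _ => hKLπ_nonneg k)
  have hb2 : ∑ k ∈ S \ S', KL (q k) π ≤ ∑ k ∈ S \ S', KL (q k) (μ k) + T * Cπ := by
    have hper : ∀ k ∈ S \ S', KL (q k) π ≤ KL (q k) (μ k) + Cπ := by
      intro k _
      rw [hCπ, hinfπ]
      exact KL_pi_le (hqprob k) (hμ k) (hμf k) hπf hy₀min'
    have hcard : (((S \ S').card : ℝ)) ≤ (T : ℝ) := by
      exact_mod_cast le_trans (Finset.card_le_card Finset.sdiff_subset) hScard.le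
    calc ∑ k ∈ S \ S', KL (q k) π ≤ ∑ k ∈ S \ S', (KL (q k) (μ k) + Cπ) :=
          Finset.sum_le_sum hper
      _ = ∑ k ∈ S \ S', KL (q k) (μ k) + ((S \ S').card : ℝ) * Cπ := by
          rw [Finset.sum_add_distrib, Finset.sum_const, nsmul_eq_mul]
      _ ≤ ∑ k ∈ S \ S', KL (q k) (μ k) + T * Cπ := by
          have := mul_le_mul_of_nonneg_right hcard hCπNonneg
          linarith
  have hb3 : ∑ k ∈ S \ S', KL (q k) (μ k) ≤ ∑ k ∈ S, KL (q k) (μ k) :=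
    Finset.sum_le_sum_of_subset_of_nonneg Finset.sdiff_subset
      (fun k _ _ => hKLμ_nonneg k)
  have hKLm'π : KL m' π ≤ β := by
    have h1 : ((M : ℝ) - T) * KL m' π ≤ ∑ k ∈ Finset.univ \ S', KL (q k) π := by
      rw [hm']
      linarith [hidS', hFS'nonneg]
    have h2 : ∑ k ∈ Finset.univ \ S', KL (q k) π ≤ a + T * Cπ := by
      rw [haeq]
      linarith
    have h3 : ((M : ℝ) - T) * KL m' π ≤ Cmin + T * Cπ := by linarith
    calc KL m' π = (((M : ℝ) - T) * KL m' π) / ((M : ℝ) - T) := by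
          field_simp
      _ ≤ (Cmin + T * Cπ) / ((M : ℝ) - T) := by
          apply div_le_div_of_nonneg_right h3 hc.le
      _ = β := by rw [hβdef]; ring
  have hLle : L ≤ ⨅ i : Fin M, 2 * Bhat (μ i) m' := hL.2 ⟨m', hm'prob, hKLm'π, rfl⟩
  have hinf_le : (⨅ i : Fin M, 2 * Bhat (μ i) m') ≤ 2 * Bhat (μ i₀) m' :=
    ciInf_le (Set.finite_range _).bddBelow i₀
  linarith
end
end

section
/- (Theorem 11.) Suppose |𝒴| ≥ 2. Fix M, a full-support typical distribution π on 𝒴, subsets ∅ ≠ S_1 ⊊ S_2 ⊆ {1,…,M} with |S_2| < M/2, and full-support probability distributions μ_i ≠ π on 𝒴 for each i ∈ S_1. Consider the binary hypothesis testing problem between hypothesis 1 (outlier set S_1) and hypothesis 2 (outlier set S_2): given additionally full-support distributions μ_j ≠ π for j ∈ S_2∖S_1, under hypothesis h ∈ {1,2} the probability of an observation y ∈ (𝒴^M)^n is P_h(y) = ∏_{k=1}^n [ ∏_{i∈S_h} μ_i(y_k^{(i)}) ∏_{j∉S_h} π(y_k^{(j)}) ]. Then there does not exist a sequence of tests δ_n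 : (𝒴^M)^n → {1,2} (which may depend on π and on (μ_i)_{i∈S_1}) such that for every choice of full-support distributions μ_j ≠ π, j ∈ S_2∖S_1, both liminf_{n→∞} −(1/n) log P_1{ y : δ_n(y) ≠ 1 } > 0 and liminf_{n→∞} −(1/n) log P_2{ y : δ_n(y) ≠ 2 } > 0. That is, when the outlier coordinates can be distinctly distributed and their number is unknown, there cannot exist a universally exponentially consistent test, even when the typical distribution is known and the null hypothesis is excluded. -/
open Filter Finset Topology

noncomputable section

/-- Probability of an event under a pmf on a finite sample space. -/
def probOf {α : Type} [Fintype α] (P : α → ℝ) (A : Set α) : ℝ :=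
  ∑ y, A.indicator P y

namespace Statement19Aux

lemma sum_prod_pmf {𝓨 : Type} [Fintype 𝓨] {M n : ℕ} (p : Fin M → 𝓨 → ℝ)
    (hp : ∀ j, ∑ z, p j z = 1) :
    ∑ y : Fin n → Fin M → 𝓨, ∏ k, ∏ j, p j (y k j) = 1 := by
  have h1 : ∑ w : Fin M → 𝓨, ∏ j, p j (w j) = 1 := by
    rw [← Fintype.prod_sum fun j z => p j z]
    exact Finset.prod_eq_one fun j _ => hp j
  calc ∑ y : Fin n → Fin M → 𝓨, ∏ k, ∏ j, p j (y k j)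
      = ∏ _k : Fin n, ∑ w : Fin M → 𝓨, ∏ j, p j (w j) :=
        (Fintype.prod_sum fun (_ : Fin n) (w : Fin M → 𝓨) => ∏ j, p j (w j)).symm
    _ = 1 := by rw [h1]; simp

lemma probOf_nonneg {α : Type} [Fintype α] {P : α → ℝ} (hP : ∀ y, 0 ≤ P y) (A : Set α) :
    0 ≤ probOf P A :=
  Finset.sum_nonneg fun y _ => Set.indicator_nonneg (fun z _ => hP z) y

lemma probOf_le_total {α : Type} [Fintype α] {P : α → ℝ} (hP : ∀ y, 0 ≤ P y) (A : Set α) :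
    probOf P A ≤ ∑ y, P y :=
  Finset.sum_le_sum fun y _ => Set.indicator_le_self' (fun z _ => hP z) y

lemma probOf_compl {α : Type} [Fintype α] (P : α → ℝ) (A : Set α) :
    probOf P A + probOf P Aᶜ = ∑ y, P y := by
  classical
  rw [probOf, probOf, ← Finset.sum_add_distrib]
  refine Finset.sum_congr rfl fun y _ => ?_
  by_cases hy : y ∈ A
  · rw [Set.indicator_of_mem hy, Set.indicator_of_notMem (by simpa using hy), add_zero]
  · rw [Set.indicator_of_notMem hy, Set.indicator_of_mem (by simpa using hy), zero_add]

lemma probOf_ratio {α : Type} [Fintype α] {P Q : α → ℝ} {c : ℝ}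
    (hc : 0 ≤ c) (h : ∀ y, c * Q y ≤ P y) (A : Set α) :
    c * probOf Q A ≤ probOf P A := by
  rw [probOf, probOf, Finset.mul_sum]
  refine Finset.sum_le_sum fun y _ => ?_
  by_cases hy : y ∈ A
  · rw [Set.indicator_of_mem hy, Set.indicator_of_mem hy]; exact h y
  · rw [Set.indicator_of_notMem hy, Set.indicator_of_notMem hy, mul_zero]

lemma key_bound {𝓨 : Type} [Fintype 𝓨] {M : ℕ} (F G : Fin M → 𝓨 → ℝ)
    (hG : ∀ j z, 0 ≤ G j z) {e : ℝ} (he : 0 ≤ e) (hFG : ∀ j z, e * G j z ≤ F j z)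
    (n : ℕ) (y : Fin n → Fin M → 𝓨) :
    e ^ (M * n) * ∏ k, ∏ j, G j (y k j) ≤ ∏ k, ∏ j, F j (y k j) := by
  have step : ∀ k : Fin n, e ^ M * ∏ j, G j (y k j) ≤ ∏ j, F j (y k j) := by
    intro k
    have h1 : ∏ j, (e * G j (y k j)) ≤ ∏ j, F j (y k j) :=
      Finset.prod_le_prod (fun j _ => mul_nonneg he (hG _ _)) (fun j _ => hFG _ _)
    calc e ^ M * ∏ j, G j (y k j) = ∏ j, (e * G j (y k j)) := by
          rw [Finset.prod_mul_distrib, Finset.prod_const, Finset.card_univ, Fintype.card_fin]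
      _ ≤ ∏ j, F j (y k j) := h1
  have h2 : ∏ k, (e ^ M * ∏ j, G j (y k j)) ≤ ∏ k, ∏ j, F j (y k j) :=
    Finset.prod_le_prod
      (fun k _ => mul_nonneg (pow_nonneg he _) (Finset.prod_nonneg fun j _ => hG _ _))
      (fun k _ => step k)
  calc e ^ (M * n) * ∏ k, ∏ j, G j (y k j)
      = ∏ k, (e ^ M * ∏ j, G j (y k j)) := by
        rw [Finset.prod_mul_distrib, Finset.prod_const, Finset.card_univ, Fintype.card_fin,
          ← pow_mul]
    _ ≤ ∏ k, ∏ j, F j (y k j) := h2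

lemma main_aux {𝓨 : Type} [Fintype 𝓨] {M : ℕ} (F G : Fin M → 𝓨 → ℝ)
    (hF0 : ∀ j z, 0 ≤ F j z) (hG0 : ∀ j z, 0 ≤ G j z)
    (hF1 : ∀ j, ∑ z, F j z = 1) (hG1 : ∀ j, ∑ z, G j z = 1)
    (r : ℝ) (hr : 0 ≤ r) (hFG : ∀ j z, Real.exp (-r) * G j z ≤ F j z)
    (δ : (n : ℕ) → (Fin n → Fin M → 𝓨) → Bool)
    (h2 : 0 < Filter.liminf (fun n : ℕ =>
        -(1 / (n : ℝ)) * Real.log (probOf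
          (fun y : Fin n → Fin M → 𝓨 => ∏ k, ∏ j, G j (y k j))
          {y | δ n y ≠ true})) atTop)
    (ε : ℝ) (hε : 0 < ε) :
    Filter.liminf (fun n : ℕ =>
        -(1 / (n : ℝ)) * Real.log (probOf
          (fun y : Fin n → Fin M → 𝓨 => ∏ k, ∏ j, F j (y k j))
          {y | δ n y ≠ false})) atTop ≤ (M : ℝ) * r + ε := by
  classical
  set p : ℕ → ℝ := fun n => probOf
      (fun y : Fin n → Fin M → 𝓨 => ∏ k, ∏ j, G j (y k j)) {y | δ n y ≠ true} with hp_def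
  set q : ℕ → ℝ := fun n => probOf
      (fun y : Fin n → Fin M → 𝓨 => ∏ k, ∏ j, F j (y k j)) {y | δ n y ≠ false} with hq_def
  have hP2y0 : ∀ (n : ℕ) (y : Fin n → Fin M → 𝓨), 0 ≤ ∏ k, ∏ j, G j (y k j) :=
    fun n y => Finset.prod_nonneg fun k _ => Finset.prod_nonneg fun j _ => hG0 _ _
  have hP1y0 : ∀ (n : ℕ) (y : Fin n → Fin M → 𝓨), 0 ≤ ∏ k, ∏ j, F j (y k j) :=
    fun n y => Finset.prod_nonneg fun k _ => Finset.prod_nonneg fun j _ => hF0 _ _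
  have hp0 : ∀ n, 0 ≤ p n := fun n => probOf_nonneg (hP2y0 n) _
  have hp1 : ∀ n, p n ≤ 1 := by
    intro n
    have := probOf_le_total (P := fun y : Fin n → Fin M → 𝓨 => ∏ k, ∏ j, G j (y k j))
      (hP2y0 n) {y | δ n y ≠ true}
    rwa [sum_prod_pmf G hG1] at this
  have hq0 : ∀ n, 0 ≤ q n := fun n => probOf_nonneg (hP1y0 n) _
  have hq1 : ∀ n, q n ≤ 1 := by
    intro n
    have := probOf_le_total (P := fun y : Fin n → Fin M → 𝓨 => ∏ k, ∏ j, F j (y k j))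
      (hP1y0 n) {y | δ n y ≠ false}
    rwa [sum_prod_pmf F hF1] at this
  have ha0 : ∀ n : ℕ, 0 ≤ -(1 / (n : ℝ)) * Real.log (p n) := by
    intro n
    have h1 : Real.log (p n) ≤ 0 := Real.log_nonpos (hp0 n) (hp1 n)
    have h2 : (0 : ℝ) ≤ 1 / (n : ℝ) := by positivity
    nlinarith
  have hb0 : ∀ n : ℕ, 0 ≤ -(1 / (n : ℝ)) * Real.log (q n) := by
    intro n
    have h1 : Real.log (q n) ≤ 0 := Real.log_nonpos (hq0 n) (hq1 n)
    have h2 : (0 : ℝ) ≤ 1 / (n : ℝ) := by positivity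
    nlinarith
  -- Step 1: eventually `p n ≤ 1/2`.
  have hphalf : ∀ᶠ n in atTop, p n ≤ 1 / 2 := by
    by_contra hcon
    rw [Filter.not_eventually] at hcon
    set L2 : ℝ := Filter.liminf (fun n : ℕ => -(1 / (n : ℝ)) * Real.log (p n)) atTop with hL2d
    have hL2pos : 0 < L2 := h2
    have hdiv : ∀ᶠ n : ℕ in atTop, Real.log 2 / (n : ℝ) < L2 / 2 :=
      (tendsto_const_div_atTop_nhds_zero_nat (Real.log 2)).eventually_lt_const (by linarith)
    have hfr : ∃ᶠ n : ℕ in atTop, -(1 / (n : ℝ)) * Real.log (p n) ≤ L2 / 2 := by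
      refine (hcon.and_eventually hdiv).mono ?_
      rintro n ⟨hn1, hn2⟩
      push_neg at hn1
      have hppos : (0 : ℝ) < p n := by linarith
      have hlog : Real.log (1 / 2) ≤ Real.log (p n) :=
        Real.log_le_log (by norm_num) (le_of_lt hn1)
      have hhalf : Real.log (1 / 2 : ℝ) = -Real.log 2 := by
        rw [one_div, Real.log_inv]
      have h3 : (0 : ℝ) ≤ 1 / (n : ℝ) := by positivity
      have h4 : -(1 / (n : ℝ)) * Real.log (p n) ≤ (1 / (n : ℝ)) * Real.log 2 := by
        rw [hhalf] at hlog; nlinarith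
      have h5 : (1 / (n : ℝ)) * Real.log 2 = Real.log 2 / (n : ℝ) := by ring
      linarith
    have := liminf_le_of_frequently_le hfr (isBoundedUnder_of ⟨0, ha0⟩)
    rw [← hL2d] at this
    linarith
  -- Step 2: change of measure lower bound on `q n`.
  have hcompl : ∀ n : ℕ, probOf (fun y : Fin n → Fin M → 𝓨 => ∏ k, ∏ j, G j (y k j))
      {y | δ n y ≠ false} = 1 - p n := by
    intro n
    have hset : ({y : Fin n → Fin M → 𝓨 | δ n y ≠ false})ᶜ = {y | δ n y ≠ true} := by
      ext y
      simp only [Set.mem_compl_iff, Set.mem_setOf_eq]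
      cases h : δ n y <;> simp
    have h := probOf_compl (fun y : Fin n → Fin M → 𝓨 => ∏ k, ∏ j, G j (y k j))
      {y | δ n y ≠ false}
    rw [sum_prod_pmf G hG1, hset] at h
    rw [hp_def]
    linarith
  have hqlb : ∀ n : ℕ, Real.exp (-r) ^ (M * n) * (1 - p n) ≤ q n := by
    intro n
    have h1 := probOf_ratio (c := Real.exp (-r) ^ (M * n))
      (pow_nonneg (Real.exp_nonneg _) _)
      (fun y => key_bound F G hG0 (Real.exp_nonneg _) hFG n y)
      {y : Fin n → Fin M → 𝓨 | δ n y ≠ false}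
    rw [hcompl n] at h1
    exact h1
  -- Step 3: eventual upper bound on the exponent under hypothesis 1.
  have hdiv : ∀ᶠ n : ℕ in atTop, Real.log 2 / (n : ℝ) < ε :=
    (tendsto_const_div_atTop_nhds_zero_nat (Real.log 2)).eventually_lt_const hε
  have hev : ∀ᶠ n : ℕ in atTop, -(1 / (n : ℝ)) * Real.log (q n) ≤ (M : ℝ) * r + ε := by
    filter_upwards [hphalf, hdiv, eventually_ge_atTop 1] with n hn1 hn2 hn3
    have hn0 : (0 : ℝ) < (n : ℝ) := by exact_mod_cast hn3
    have hE : Real.exp (-r) ^ (M * n) = Real.exp (-(((M : ℝ) * n) * r)) := by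
      rw [← Real.exp_nat_mul]
      push_cast
      ring_nf
    have hqpos : Real.exp (-(((M : ℝ) * n) * r)) * (1 / 2) ≤ q n := by
      have h1 : Real.exp (-r) ^ (M * n) * (1 / 2) ≤ Real.exp (-r) ^ (M * n) * (1 - p n) :=
        mul_le_mul_of_nonneg_left (by linarith) (pow_nonneg (Real.exp_nonneg _) _)
      have := le_trans h1 (hqlb n)
      rwa [hE] at this
    have hqpos' : (0 : ℝ) < q n :=
      lt_of_lt_of_le (by positivity) hqpos
    have hlogq : Real.log (Real.exp (-(((M : ℝ) * n) * r)) * (1 / 2)) ≤ Real.log (q n) :=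
      Real.log_le_log (by positivity) hqpos
    have hval : Real.log (Real.exp (-(((M : ℝ) * n) * r)) * (1 / 2))
        = -(((M : ℝ) * n) * r) - Real.log 2 := by
      rw [Real.log_mul (by positivity) (by norm_num), Real.log_exp, one_div, Real.log_inv]
      ring
    rw [hval] at hlogq
    have key : -Real.log (q n) ≤ ((M : ℝ) * n) * r + Real.log 2 := by linarith
    have hstep : -(1 / (n : ℝ)) * Real.log (q n) = (1 / (n : ℝ)) * (-Real.log (q n)) := by ring
    rw [hstep]
    have h6 : (1 / (n : ℝ)) * (-Real.log (q n)) ≤ (1 / (n : ℝ)) * (((M : ℝ) * n) * r + Real.log 2) :=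
      mul_le_mul_of_nonneg_left key (by positivity)
    have h7 : (1 / (n : ℝ)) * (((M : ℝ) * n) * r + Real.log 2)
        = (M : ℝ) * r + Real.log 2 / (n : ℝ) := by
      field_simp
    rw [h7] at h6
    linarith
  exact liminf_le_of_frequently_le hev.frequently (isBoundedUnder_of ⟨0, hb0⟩)

end Statement19Aux

open Statement19Aux in
/-- Theorem 11.  With nested outlier sets `∅ ≠ S₁ ⊊ S₂`,
`|S₂| < M/2`, known typical distribution `π` and known outlier distributions
`(μ_i)_{i∈S₁}`, no sequence of binary tests (hypothesis 1: outlier set `S₁`;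
hypothesis 2: outlier set `S₂`) can have strictly positive error exponents
under both hypotheses for every choice of full-support outlier distributions
`μ_j ≠ π`, `j ∈ S₂∖S₁`.  (Hypothesis 1 is encoded by `false` and hypothesis 2
by `true`.) -/
theorem statement19 (𝓨 : Type) [Fintype 𝓨] (hcard : 2 ≤ Fintype.card 𝓨)
    (M : ℕ) (π : 𝓨 → ℝ) (hπ : IsProb π) (hπf : FullSupport π)
    (S₁ S₂ : Finset (Fin M)) (hS₁ : S₁.Nonempty) (hS₁₂ : S₁ ⊂ S₂)
    (hS₂ : 2 * S₂.card < M)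
    (μ : Fin M → 𝓨 → ℝ)
    (hμ : ∀ i ∈ S₁, IsProb (μ i) ∧ FullSupport (μ i) ∧ μ i ≠ π) :
    ¬ ∃ δ : (n : ℕ) → (Fin n → Fin M → 𝓨) → Bool,
      ∀ ν : Fin M → 𝓨 → ℝ,
        (∀ j ∈ S₂ \ S₁, IsProb (ν j) ∧ FullSupport (ν j) ∧ ν j ≠ π) →
        (0 < Filter.liminf (fun n : ℕ =>
            -(1 / (n : ℝ)) * Real.log (probOf
              (fun y : Fin n → Fin M → 𝓨 =>
                ∏ k, ∏ j, (if j ∈ S₁ then μ j else π) (y k j))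
              {y | δ n y ≠ false})) atTop) ∧
        (0 < Filter.liminf (fun n : ℕ =>
            -(1 / (n : ℝ)) * Real.log (probOf
              (fun y : Fin n → Fin M → 𝓨 =>
                ∏ k, ∏ j, (if j ∈ S₁ then μ j
                  else if j ∈ S₂ then ν j else π) (y k j))
              {y | δ n y ≠ true})) atTop) := by
  classical
  rintro ⟨δ, hδ⟩
  -- an alphabet letter where `π` is not concentrated
  obtain ⟨z0, hz0⟩ : ∃ z : 𝓨, π z < 1 := by
    by_contra h
    push_neg at h
    have h1 : (Fintype.card 𝓨 : ℝ) ≤ ∑ z, π z := by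
      calc (Fintype.card 𝓨 : ℝ) = ∑ _z : 𝓨, (1 : ℝ) := by simp
        _ ≤ ∑ z, π z := Finset.sum_le_sum fun z _ => h z
    rw [hπ.2] at h1
    have h2 : (2 : ℝ) ≤ (Fintype.card 𝓨 : ℝ) := by exact_mod_cast hcard
    linarith
  have hπz0 : 0 < π z0 := hπf z0
  -- family of perturbed outlier distributions
  set ν : ℝ → Fin M → 𝓨 → ℝ :=
    fun t _ z => (1 - t) * π z + t * (if z = z0 then 1 else 0) with hνdef
  have hνnn : ∀ t : ℝ, 0 < t → t < 1 → ∀ (j : Fin M) (z : 𝓨), 0 ≤ ν t j z := by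
    intro t ht0 ht1 j z
    have := hπ.1 z
    have : 0 ≤ (1 - t) * π z := mul_nonneg (by linarith) (hπ.1 z)
    have : 0 ≤ t * (if z = z0 then (1 : ℝ) else 0) :=
      mul_nonneg (le_of_lt ht0) (by split_ifs <;> norm_num)
    simp only [hνdef]
    linarith
  have hνsum : ∀ (t : ℝ) (j : Fin M), ∑ z, ν t j z = 1 := by
    intro t j
    simp only [hνdef]
    rw [Finset.sum_add_distrib, ← Finset.mul_sum, ← Finset.mul_sum, hπ.2,
      Finset.sum_ite_eq' Finset.univ z0 (fun _ => (1 : ℝ))]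
    simp
  have hνvalid : ∀ t : ℝ, 0 < t → t < 1 →
      ∀ j ∈ S₂ \ S₁, IsProb (ν t j) ∧ FullSupport (ν t j) ∧ ν t j ≠ π := by
    intro t ht0 ht1 j _
    refine ⟨⟨hνnn t ht0 ht1 j, hνsum t j⟩, ?_, ?_⟩
    · intro z
      have h1 : 0 < (1 - t) * π z := mul_pos (by linarith) (hπf z)
      have h2 : 0 ≤ t * (if z = z0 then (1 : ℝ) else 0) :=
        mul_nonneg (le_of_lt ht0) (by split_ifs <;> norm_num)
      simp only [hνdef]
      linarith
    · intro hEq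
      have h0 := congrFun hEq z0
      simp [hνdef] at h0
      nlinarith
  -- extract positivity of the hypothesis-1 exponent
  obtain ⟨hL1, -⟩ := hδ (ν (1 / 2)) (hνvalid (1 / 2) (by norm_num) (by norm_num))
  set L1 : ℝ := Filter.liminf (fun n : ℕ =>
      -(1 / (n : ℝ)) * Real.log (probOf
        (fun y : Fin n → Fin M → 𝓨 =>
          ∏ k, ∏ j, (if j ∈ S₁ then μ j else π) (y k j))
        {y | δ n y ≠ false})) atTop with hL1def
  have hL1pos : 0 < L1 := hL1
  -- choose a small perturbation parameter
  have hexp1 : 1 < Real.exp (L1 / ((M : ℝ) + 1)) := by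
    rw [Real.one_lt_exp_iff]
    positivity
  set t : ℝ := min (1 / 2) (π z0 * (Real.exp (L1 / ((M : ℝ) + 1)) - 1)) with htdef
  have ht0 : 0 < t := lt_min (by norm_num) (by nlinarith)
  have ht1 : t < 1 := lt_of_le_of_lt (min_le_left _ _) (by norm_num)
  set r : ℝ := Real.log (1 + t / π z0) with hrdef
  have htdiv : 0 < t / π z0 := by positivity
  have hr0 : 0 ≤ r := Real.log_nonneg (by linarith)
  have hr_le : r ≤ L1 / ((M : ℝ) + 1) := by
    have h1 : t ≤ π z0 * (Real.exp (L1 / ((M : ℝ) + 1)) - 1) := min_le_right _ _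
    have h2 : t / π z0 ≤ Real.exp (L1 / ((M : ℝ) + 1)) - 1 := by
      rw [div_le_iff₀ hπz0]; nlinarith
    have h3 : 1 + t / π z0 ≤ Real.exp (L1 / ((M : ℝ) + 1)) := by linarith
    calc r ≤ Real.log (Real.exp (L1 / ((M : ℝ) + 1))) :=
          Real.log_le_log (by positivity) h3
      _ = L1 / ((M : ℝ) + 1) := Real.log_exp _
  have hcL1 : (M : ℝ) * r < L1 := by
    have hM1 : (0 : ℝ) < (M : ℝ) + 1 := by positivity
    have h1 : (M : ℝ) * r ≤ (M : ℝ) * (L1 / ((M : ℝ) + 1)) :=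
      mul_le_mul_of_nonneg_left hr_le (Nat.cast_nonneg M)
    have h2 : (M : ℝ) * (L1 / ((M : ℝ) + 1)) < L1 := by
      rw [mul_div_assoc']
      rw [div_lt_iff₀ hM1]
      nlinarith
    linarith
  -- extract positivity of the hypothesis-2 exponent for this `ν t`
  obtain ⟨-, hL2⟩ := hδ (ν t) (hνvalid t ht0 ht1)
  -- per-letter distributions
  have hF0 : ∀ (j : Fin M) (z : 𝓨), 0 ≤ (if j ∈ S₁ then μ j else π) z := by
    intro j z
    split_ifs with h
    · exact (hμ j h).1.1 z
    · exact hπ.1 z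
  have hF1 : ∀ j : Fin M, ∑ z, (if j ∈ S₁ then μ j else π) z = 1 := by
    intro j
    split_ifs with h
    · exact (hμ j h).1.2
    · exact hπ.2
  have hG0 : ∀ (j : Fin M) (z : 𝓨),
      0 ≤ (if j ∈ S₁ then μ j else if j ∈ S₂ then ν t j else π) z := by
    intro j z
    split_ifs with h1 h2
    · exact (hμ j h1).1.1 z
    · exact hνnn t ht0 ht1 j z
    · exact hπ.1 z
  have hG1 : ∀ j : Fin M, ∑ z, (if j ∈ S₁ then μ j else if j ∈ S₂ then ν t j else π) z = 1 := by
    intro j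
    split_ifs with h1 h2
    · exact (hμ j h1).1.2
    · exact hνsum t j
    · exact hπ.2
  -- the likelihood ratio bound
  have hx : (0 : ℝ) < 1 + t / π z0 := by positivity
  have her : Real.exp (-r) = (1 + t / π z0)⁻¹ := by
    rw [hrdef, Real.exp_neg, Real.exp_log hx]
  have hνle : ∀ (j : Fin M) (z : 𝓨), ν t j z ≤ (1 + t / π z0) * π z := by
    intro j z
    simp only [hνdef]
    by_cases hz : z = z0
    · rw [if_pos hz, hz]
      have h1 : (1 + t / π z0) * π z0 = π z0 + t := by field_simp
      nlinarith
    · rw [if_neg hz]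
      have h1 : 0 < π z := hπf z
      nlinarith
  have hFG : ∀ (j : Fin M) (z : 𝓨),
      Real.exp (-r) * (if j ∈ S₁ then μ j else if j ∈ S₂ then ν t j else π) z
        ≤ (if j ∈ S₁ then μ j else π) z := by
    intro j z
    have hle1 : Real.exp (-r) ≤ 1 := Real.exp_le_one_iff.mpr (by linarith)
    split_ifs with h1 h2
    · exact mul_le_of_le_one_left ((hμ j h1).1.1 z) hle1
    · -- exp(-r) * ν ≤ π
      rw [her]
      have h3 := hνle j z
      calc (1 + t / π z0)⁻¹ * ν t j z ≤ (1 + t / π z0)⁻¹ * ((1 + t / π z0) * π z) :=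
            mul_le_mul_of_nonneg_left h3 (by positivity)
        _ = π z := by field_simp
    · exact mul_le_of_le_one_left (hπ.1 z) hle1
  -- apply the converse bound
  set ε : ℝ := (L1 - (M : ℝ) * r) / 2 with hεdef
  have hε : 0 < ε := by rw [hεdef]; linarith
  have key := main_aux
    (fun j => if j ∈ S₁ then μ j else π)
    (fun j => if j ∈ S₁ then μ j else if j ∈ S₂ then ν t j else π)
    hF0 hG0 hF1 hG1 r hr0 hFG δ hL2 ε hε
  have key' : L1 ≤ (M : ℝ) * r + ε := by
    rw [hL1def]
    exact key
  rw [hεdef] at key'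
  linarith
end
end
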